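/- arXiv:2103.11839 — 5 statements merged into one kernel-verified Lean document; each statement's English description precedes it below -/
import Mathlib

section
/- Let m ≥ 1 be an integer and let x be a real number with 0 < x < 1. Then ∫₀ˣ log^m(1−t)/t dt = log(x)·log^m(1−x) + Σ_{k=0}^{m−2} (−1)^k (m−k)_{k+1} log^{m−k−1}(1−x)·Li_{k+2}(1−x) + (−1)^{m−1} m!·Li_{m+1}(1−x) + (−1)^m m!·ζ(m+1). Moreover, ∫₀¹ log^m(1−t)/t dt = (−1)^m m!·ζ(m+1). -/
open Real MeasureTheory Finset intervalIntegral Filter Set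

/-- `Li p x = ∑_{n≥1} x^n / n^p`, the polylogarithm. -/
noncomputable def Li (p : ℕ) (x : ℝ) : ℝ := ∑' n : ℕ, x ^ (n + 1) / (n + 1 : ℝ) ^ p

/-- `zr s = ζ(s) = ∑_{n≥1} n^{-s}`. -/
noncomputable def zr (s : ℕ) : ℝ := ∑' n : ℕ, 1 / (n + 1 : ℝ) ^ s

/-- Pochhammer symbol `(t)_k = t(t+1)⋯(t+k-1)`. -/
noncomputable def poch (t : ℝ) (k : ℕ) : ℝ := ∏ i ∈ Finset.range k, (t + i)

/-- Antiderivative of `u^n * log u ^ m`. -/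
noncomputable def Fc (n m : ℕ) (u : ℝ) : ℝ :=
  ∑ j ∈ Finset.range (m + 1),
    (-1 : ℝ) ^ j * (m.descFactorial j : ℝ) * u ^ (n + 1) * Real.log u ^ (m - j)
      / ((n : ℝ) + 1) ^ (j + 1)

lemma Fc_zeroth (n : ℕ) (u : ℝ) : Fc n 0 u = u ^ (n + 1) / ((n : ℝ) + 1) := by
  simp [Fc]

lemma Fc_rec (n m : ℕ) (u : ℝ) :
    Fc n (m + 1) u = u ^ (n + 1) * Real.log u ^ (m + 1) / ((n : ℝ) + 1)
      - ((m : ℝ) + 1) / ((n : ℝ) + 1) * Fc n m u := by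
  have hn : ((n : ℝ) + 1) ≠ 0 := by positivity
  unfold Fc
  rw [Finset.sum_range_succ']
  rw [Finset.mul_sum]
  have h1 : ∀ j ∈ Finset.range (m + 1),
      (-1 : ℝ) ^ (j+1) * ((m+1).descFactorial (j+1) : ℝ) * u ^ (n + 1) * Real.log u ^ (m + 1 - (j+1))
      / ((n : ℝ) + 1) ^ (j + 1 + 1) =
      -(((m : ℝ) + 1) / ((n : ℝ) + 1) *
        ((-1 : ℝ) ^ j * (m.descFactorial j : ℝ) * u ^ (n + 1) * Real.log u ^ (m - j)
      / ((n : ℝ) + 1) ^ (j + 1))) := by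
    intro j hj
    rw [Nat.succ_descFactorial_succ]
    have : m + 1 - (j + 1) = m - j := by omega
    rw [this]
    push_cast
    field_simp
    ring
  rw [Finset.sum_congr rfl h1]
  simp [Nat.descFactorial]
  ring

lemma Fc_deriv (n m : ℕ) {u : ℝ} (hu : 0 < u) :
    HasDerivAt (Fc n m) (u ^ n * Real.log u ^ m) u := by
  have hn : ((n : ℝ) + 1) ≠ 0 := by positivity
  induction m with
  | zero =>
    have h : HasDerivAt (fun v : ℝ => v ^ (n + 1) / ((n : ℝ) + 1)) (u ^ n * Real.log u ^ 0) u := by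
      have := (hasDerivAt_pow (n + 1) u).div_const ((n : ℝ) + 1)
      simp only [Nat.add_sub_cancel, pow_zero, mul_one] at this ⊢
      refine this.congr_deriv ?_
      push_cast
      field_simp
    have he : (fun v : ℝ => v ^ (n + 1) / ((n : ℝ) + 1)) = Fc n 0 := by
      funext v; rw [Fc_zeroth]
    rwa [he] at h
  | succ m ih =>
    have h1 : HasDerivAt (fun v : ℝ => v ^ (n + 1) * Real.log v ^ (m + 1) / ((n : ℝ) + 1)
        - ((m : ℝ) + 1) / ((n : ℝ) + 1) * Fc n m v) (u ^ n * Real.log u ^ (m + 1)) u := by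
      have hp : HasDerivAt (fun v : ℝ => v ^ (n + 1) * Real.log v ^ (m + 1))
          (((n : ℝ) + 1) * u ^ n * Real.log u ^ (m + 1)
            + u ^ (n + 1) * (((m : ℝ) + 1) * Real.log u ^ m * u⁻¹)) u := by
        have hlog : HasDerivAt (fun v : ℝ => Real.log v ^ (m + 1))
            (((m : ℝ) + 1) * Real.log u ^ m * u⁻¹) u := by
          have := ((Real.hasDerivAt_log hu.ne').pow (m + 1))
          simpa [Nat.add_sub_cancel, one_div, Pi.pow_def] using this
        have := (hasDerivAt_pow (n + 1) u).mul hlog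
        simpa [Nat.add_sub_cancel, mul_comm, mul_assoc, mul_left_comm, Pi.mul_def] using this
      have := (hp.div_const ((n : ℝ) + 1)).sub ((ih).const_mul (((m : ℝ) + 1) / ((n : ℝ) + 1)))
      refine this.congr_deriv ?_
      have hu' : (u : ℝ) ≠ 0 := hu.ne'
      field_simp
      ring
    have he : (fun v : ℝ => v ^ (n + 1) * Real.log v ^ (m + 1) / ((n : ℝ) + 1)
        - ((m : ℝ) + 1) / ((n : ℝ) + 1) * Fc n m v) = Fc n (m + 1) := by
      funext v; rw [Fc_rec]
    rwa [he] at h1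

lemma Fc_one (n m : ℕ) : Fc n m 1 = (-1 : ℝ) ^ m * (m.factorial : ℝ) / ((n : ℝ) + 1) ^ (m + 1) := by
  have hn : ((n : ℝ) + 1) ≠ 0 := by positivity
  induction m with
  | zero => simp [Fc_zeroth]
  | succ m ih =>
    rw [Fc_rec, ih]
    simp only [Real.log_one, one_pow, Nat.factorial_succ]
    push_cast
    field_simp
    ring

lemma Fc_zero (n m : ℕ) : Fc n m 0 = 0 := by
  simp [Fc]

lemma tendsto_pow_mul_log_pow (n p : ℕ) :
    Tendsto (fun u : ℝ => u ^ (n + 1) * Real.log u ^ p) (nhdsWithin 0 (Set.Ioi 0)) (nhds 0) := by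
  rcases Nat.eq_zero_or_pos p with hp | hp
  · subst hp
    simp only [pow_zero, mul_one]
    have : Tendsto (fun u : ℝ => u ^ (n + 1)) (nhdsWithin 0 (Set.Ioi 0)) (nhds (0 ^ (n + 1))) :=
      ((continuous_pow (n + 1)).tendsto 0).mono_left nhdsWithin_le_nhds
    simpa using this
  · have hr : (0 : ℝ) < 1 / p := by positivity
    have h1 : Tendsto (fun u : ℝ => u ^ n * (Real.log u * u ^ (1 / (p : ℝ))) ^ p)
        (nhdsWithin 0 (Set.Ioi 0)) (nhds 0) := by
      have ha : Tendsto (fun u : ℝ => u ^ n) (nhdsWithin 0 (Set.Ioi 0)) (nhds (0 ^ n)) :=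
        ((continuous_pow n).tendsto 0).mono_left nhdsWithin_le_nhds
      have hb : Tendsto (fun u : ℝ => (Real.log u * u ^ (1 / (p : ℝ))) ^ p)
          (nhdsWithin 0 (Set.Ioi 0)) (nhds 0) := by
        have := (tendsto_log_mul_rpow_nhdsGT_zero hr).pow p
        simpa [zero_pow hp.ne'] using this
      simpa using ha.mul hb
    refine h1.congr' ?_
    filter_upwards [self_mem_nhdsWithin] with u hu
    have hu0 : (0 : ℝ) < u := hu
    have : (u ^ (1 / (p : ℝ))) ^ p = u := by
      rw [← Real.rpow_natCast (u ^ (1 / (p : ℝ))) p, ← Real.rpow_mul hu0.le]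
      rw [one_div, inv_mul_cancel₀ (by exact_mod_cast hp.ne' : (p : ℝ) ≠ 0), Real.rpow_one]
    rw [mul_pow, this]
    ring

lemma cont_aux (n p : ℕ) : ContinuousOn (fun u : ℝ => u ^ (n + 1) * Real.log u ^ p)
    (Set.Icc 0 1) := by
  intro v hv
  rcases eq_or_lt_of_le hv.1 with hv0 | hv0
  · subst hv0
    rw [ContinuousWithinAt]
    have h0 : (0:ℝ) ^ (n + 1) * Real.log 0 ^ p = 0 := by simp
    rw [h0]
    have hsub : Set.Icc (0:ℝ) 1 ⊆ {0} ∪ Set.Ioi 0 := by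
      intro y hy
      rcases eq_or_lt_of_le hy.1 with h | h
      · exact Or.inl h.symm
      · exact Or.inr h
    refine Tendsto.mono_left ?_ (nhdsWithin_mono 0 hsub)
    rw [nhdsWithin_union, tendsto_sup]
    refine ⟨?_, tendsto_pow_mul_log_pow n p⟩
    have : nhdsWithin (0:ℝ) {0} ≤ pure 0 := nhdsWithin_singleton (0:ℝ) ▸ le_rfl
    exact (tendsto_pure_nhds (fun u : ℝ => u ^ (n + 1) * Real.log u ^ p) 0).mono_left this
      |>.congr' (by simp [h0]) |>.mono_right le_rfl |>.congr (fun x => rfl) |>.mono_left le_rfl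
      |>.mono_right (by rw [h0])
  · exact ((continuousAt_pow _ _).mul
      ((Real.continuousAt_log hv0.ne').pow p)).continuousWithinAt

lemma Fc_cont (n m : ℕ) : ContinuousOn (Fc n m) (Set.Icc 0 1) := by
  unfold Fc
  refine continuousOn_finset_sum _ fun j hj => ?_
  have := ((cont_aux n (m - j)).const_smul ((-1 : ℝ) ^ j * (m.descFactorial j : ℝ))).div_const
    (((n : ℝ) + 1) ^ (j + 1))
  refine this.congr fun u hu => ?_
  simp [smul_eq_mul]
  ring

lemma intble (n m : ℕ) {a : ℝ} (ha : 0 ≤ a) (ha1 : a ≤ 1) :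
    IntervalIntegrable (fun u : ℝ => u ^ n * Real.log u ^ m) MeasureTheory.volume a 1 := by
  have h : IntervalIntegrable (fun u : ℝ => (-1 : ℝ) ^ m * (u ^ n * Real.log u ^ m))
      MeasureTheory.volume a 1 := by
    apply intervalIntegrable_deriv_of_nonneg (g := fun u => (-1 : ℝ) ^ m * Fc n m u)
    · refine (Fc_cont n m).const_smul ((-1 : ℝ) ^ m) |>.mono ?_
      rw [Set.uIcc_of_le ha1]
      exact Set.Icc_subset_Icc ha le_rfl
    · intro x hx
      rw [min_eq_left ha1, max_eq_right ha1] at hx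
      have hx0 : 0 < x := lt_of_le_of_lt ha hx.1
      exact (Fc_deriv n m hx0).const_mul _
    · intro x hx
      rw [min_eq_left ha1, max_eq_right ha1] at hx
      have hx0 : 0 < x := lt_of_le_of_lt ha hx.1
      have hlog : Real.log x ≤ 0 := Real.log_nonpos hx0.le hx.2.le
      have h1 : (-1 : ℝ) ^ m * Real.log x ^ m = (-Real.log x) ^ m := by
        rw [neg_pow]; ring
      have h2 : 0 ≤ (-1 : ℝ) ^ m * Real.log x ^ m := by
        rw [h1]; exact pow_nonneg (neg_nonneg.2 hlog) m
      calc (0:ℝ) ≤ x ^ n * ((-1 : ℝ) ^ m * Real.log x ^ m) :=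
            mul_nonneg (pow_nonneg hx0.le n) h2
        _ = (-1 : ℝ) ^ m * (x ^ n * Real.log x ^ m) := by ring
  have h2 := h.const_mul ((-1 : ℝ) ^ m)
  have he : (fun u : ℝ => (-1 : ℝ) ^ m * ((-1 : ℝ) ^ m * (u ^ n * Real.log u ^ m)))
      = fun u : ℝ => u ^ n * Real.log u ^ m := by
    funext u
    rw [← mul_assoc, ← mul_pow]
    norm_num
  rwa [he] at h2

lemma ftc (n m : ℕ) {a : ℝ} (ha : 0 ≤ a) (ha1 : a ≤ 1) :
    ∫ u in a..1, u ^ n * Real.log u ^ m = Fc n m 1 - Fc n m a :=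
  integral_eq_sub_of_hasDerivAt_of_le ha1
    ((Fc_cont n m).mono (Set.Icc_subset_Icc ha le_rfl))
    (fun u hu => Fc_deriv n m (lt_of_le_of_lt ha hu.1))
    (intble n m ha ha1)

lemma summable_one_div_shift (p : ℕ) (hp : 2 ≤ p) :
    Summable (fun n : ℕ => 1 / ((n : ℝ) + 1) ^ p) := by
  have h := (Real.summable_one_div_nat_pow (p := p)).2 hp
  have := (summable_nat_add_iff 1).2 h
  refine this.congr fun n => ?_
  push_cast
  ring_nf

lemma summable_geom_div (p : ℕ) {a : ℝ} (ha : 0 ≤ a) (ha1 : a < 1) :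
    Summable (fun n : ℕ => a ^ (n + 1) / ((n : ℝ) + 1) ^ p) := by
  refine Summable.of_nonneg_of_le (fun n => by positivity) (fun n => ?_)
    ((summable_geometric_of_lt_one ha ha1).mul_left a)
  have h1 : (1 : ℝ) ≤ ((n : ℝ) + 1) ^ p := one_le_pow₀ (by linarith [Nat.cast_nonneg (α := ℝ) n])
  calc a ^ (n + 1) / ((n : ℝ) + 1) ^ p ≤ a ^ (n + 1) / 1 :=
        div_le_div_of_nonneg_left (by positivity) (by norm_num) h1 |>.trans_eq rfl
    _ = a * a ^ n := by rw [div_one]; ring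

lemma sumFc1 (m : ℕ) (hm : 1 ≤ m) : Summable (fun n : ℕ => Fc n m 1) := by
  refine ((summable_one_div_shift (m + 1) (by omega)).mul_left
    ((-1 : ℝ) ^ m * (m.factorial : ℝ))).congr fun n => ?_
  rw [Fc_one]
  ring

lemma sumFca (m : ℕ) {a : ℝ} (ha : 0 ≤ a) (ha1 : a < 1) :
    Summable (fun n : ℕ => Fc n m a) := by
  unfold Fc
  apply summable_sum
  intro j hj
  have := (summable_geom_div (j + 1) ha ha1).mul_left
    ((-1 : ℝ) ^ j * (m.descFactorial j : ℝ) * Real.log a ^ (m - j))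
  refine this.congr fun n => ?_
  ring

lemma tsumFc1 (m : ℕ) : ∑' n : ℕ, Fc n m 1 = (-1 : ℝ) ^ m * (m.factorial : ℝ) * zr (m + 1) := by
  have h : ∀ n : ℕ, Fc n m 1 = ((-1 : ℝ) ^ m * (m.factorial : ℝ))
      * (1 / ((n : ℝ) + 1) ^ (m + 1)) := fun n => by rw [Fc_one]; ring
  rw [tsum_congr h, tsum_mul_left]
  rfl

lemma tsumFca (m : ℕ) {a : ℝ} (ha : 0 ≤ a) (ha1 : a < 1) :
    ∑' n : ℕ, Fc n m a = ∑ j ∈ Finset.range (m + 1),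
      (-1 : ℝ) ^ j * (m.descFactorial j : ℝ) * Real.log a ^ (m - j) * Li (j + 1) a := by
  unfold Fc
  rw [Summable.tsum_finsetSum (fun j hj => ((summable_geom_div (j + 1) ha ha1).mul_left
    ((-1 : ℝ) ^ j * (m.descFactorial j : ℝ) * Real.log a ^ (m - j))).congr fun n => by ring)]
  refine Finset.sum_congr rfl fun j hj => ?_
  have h : ∀ n : ℕ, (-1 : ℝ) ^ j * (m.descFactorial j : ℝ) * a ^ (n + 1) * Real.log a ^ (m - j)
      / ((n : ℝ) + 1) ^ (j + 1) = ((-1 : ℝ) ^ j * (m.descFactorial j : ℝ) * Real.log a ^ (m - j))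
      * (a ^ (n + 1) / ((n : ℝ) + 1) ^ (j + 1)) := fun n => by ring
  rw [tsum_congr h, tsum_mul_left]
  rfl

lemma key (m : ℕ) (hm : 1 ≤ m) {a : ℝ} (ha : 0 ≤ a) (ha1 : a < 1) :
    ∫ u in a..1, Real.log u ^ m / (1 - u) =
      (-1 : ℝ) ^ m * (m.factorial : ℝ) * zr (m + 1)
        - ∑ j ∈ Finset.range (m + 1),
            (-1 : ℝ) ^ j * (m.descFactorial j : ℝ) * Real.log a ^ (m - j) * Li (j + 1) a := by
  have hIoo : ∀ n : ℕ, ∫ u in Set.Ioo a 1, u ^ n * Real.log u ^ m = Fc n m 1 - Fc n m a := by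
    intro n
    rw [← MeasureTheory.integral_Ioc_eq_integral_Ioo, ← intervalIntegral.integral_of_le ha1.le]
    exact ftc n m ha ha1.le
  have hint : ∀ n : ℕ, Integrable (fun u : ℝ => u ^ n * Real.log u ^ m)
      (MeasureTheory.volume.restrict (Set.Ioo a 1)) := by
    intro n
    exact ((intble n m ha ha1.le).1).mono_set Set.Ioo_subset_Ioc_self
  have hnorm : ∀ n : ℕ, ∫ u in Set.Ioo a 1, ‖u ^ n * Real.log u ^ m‖
      = (-1 : ℝ) ^ m * (Fc n m 1 - Fc n m a) := by
    intro n
    rw [← hIoo n, ← MeasureTheory.integral_const_mul]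
    refine MeasureTheory.setIntegral_congr_fun measurableSet_Ioo fun u hu => ?_
    have hu0 : 0 < u := lt_of_le_of_lt ha hu.1
    have hlog : Real.log u ≤ 0 := Real.log_nonpos hu0.le hu.2.le
    rw [Real.norm_eq_abs, abs_mul, abs_pow, abs_of_pos hu0, abs_pow, abs_of_nonpos hlog]
    rw [neg_pow (Real.log u) m]
    ring
  have hsum : Summable (fun n : ℕ => ∫ u in Set.Ioo a 1, ‖u ^ n * Real.log u ^ m‖) := by
    refine (((sumFc1 m hm).sub (sumFca m ha ha1)).mul_left ((-1 : ℝ) ^ m)).congr fun n => ?_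
    rw [hnorm n]
  have hswap := MeasureTheory.integral_tsum_of_summable_integral_norm hint hsum
  have heq : ∀ u ∈ Set.Ioo a 1, Real.log u ^ m / (1 - u) = ∑' n : ℕ, u ^ n * Real.log u ^ m := by
    intro u hu
    have hu0 : 0 ≤ u := le_trans ha hu.1.le
    rw [tsum_mul_right, tsum_geometric_of_lt_one hu0 hu.2, div_eq_mul_inv, mul_comm]
  calc ∫ u in a..1, Real.log u ^ m / (1 - u)
      = ∫ u in Set.Ioo a 1, Real.log u ^ m / (1 - u) := by
        rw [intervalIntegral.integral_of_le ha1.le, MeasureTheory.integral_Ioc_eq_integral_Ioo]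
    _ = ∫ u in Set.Ioo a 1, ∑' n : ℕ, u ^ n * Real.log u ^ m :=
        MeasureTheory.setIntegral_congr_fun measurableSet_Ioo heq
    _ = ∑' n : ℕ, ∫ u in Set.Ioo a 1, u ^ n * Real.log u ^ m := hswap.symm
    _ = ∑' n : ℕ, (Fc n m 1 - Fc n m a) := tsum_congr hIoo
    _ = (∑' n : ℕ, Fc n m 1) - ∑' n : ℕ, Fc n m a :=
        Summable.tsum_sub (sumFc1 m hm) (sumFca m ha ha1)
    _ = _ := by rw [tsumFc1, tsumFca m ha ha1]

lemma Li_one_eq {a : ℝ} (ha : |a| < 1) : Li 1 a = -Real.log (1 - a) := by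
  rw [Li, ← (hasSum_pow_div_log_of_abs_lt_one ha).tsum_eq]
  exact tsum_congr fun n => by rw [pow_one]

lemma Li_zero_eq (p : ℕ) : Li p 0 = 0 := by
  simp [Li]

lemma poch_descFactorial (m j : ℕ) (h : j < m) :
    poch ((m : ℝ) - j) (j + 1) = (m.descFactorial (j + 1) : ℝ) := by
  rw [poch, Nat.descFactorial_eq_prod_range, Nat.cast_prod]
  rw [← Finset.prod_range_reflect (fun i => ((m - i : ℕ) : ℝ)) (j + 1)]
  refine Finset.prod_congr rfl fun i hi => ?_
  rw [Finset.mem_range] at hi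
  have h2 : j + 1 - 1 - i = j - i := by omega
  rw [h2, Nat.cast_sub (by omega : j - i ≤ m), Nat.cast_sub (by omega : i ≤ j)]
  push_cast
  ring

lemma subst_lemma (m : ℕ) (x : ℝ) :
    (∫ t in (0:ℝ)..x, (Real.log (1 - t)) ^ m / t)
      = ∫ u in (1 - x)..(1:ℝ), Real.log u ^ m / (1 - u) := by
  have h := intervalIntegral.integral_comp_sub_left (a := (0:ℝ)) (b := x)
    (fun u => Real.log u ^ m / (1 - u)) 1
  rw [sub_zero] at h
  rw [← h]
  refine intervalIntegral.integral_congr fun t ht => ?_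
  show (Real.log (1 - t)) ^ m / t = Real.log (1 - t) ^ m / (1 - (1 - t))
  rw [show (1:ℝ) - (1 - t) = t by ring]

theorem stmt0 (m : ℕ) (hm : 1 ≤ m) (x : ℝ) (hx0 : 0 < x) (hx1 : x < 1) :
    (∫ t in (0:ℝ)..x, (Real.log (1 - t)) ^ m / t) =
      Real.log x * (Real.log (1 - x)) ^ m
      + ∑ k ∈ Finset.range (m - 1), (-1 : ℝ) ^ k * poch ((m : ℝ) - k) (k + 1)
          * (Real.log (1 - x)) ^ (m - k - 1) * Li (k + 2) (1 - x)
      + (-1 : ℝ) ^ (m - 1) * (m.factorial : ℝ) * Li (m + 1) (1 - x)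
      + (-1 : ℝ) ^ m * (m.factorial : ℝ) * zr (m + 1) ∧
    (∫ t in (0:ℝ)..1, (Real.log (1 - t)) ^ m / t) =
      (-1 : ℝ) ^ m * (m.factorial : ℝ) * zr (m + 1) := by
  constructor
  · have hax : (0:ℝ) ≤ 1 - x := by linarith
    have hax1 : 1 - x < 1 := by linarith
    obtain ⟨m', rfl⟩ : ∃ m', m = m' + 1 := ⟨m - 1, by omega⟩
    rw [subst_lemma, key (m' + 1) (by omega) hax hax1]
    rw [Finset.sum_range_succ, Finset.sum_range_succ']
    simp only [Nat.add_sub_cancel]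
    have e0 : Li 1 (1 - x) = -Real.log x := by
      rw [Li_one_eq (by rw [abs_of_nonneg hax]; linarith)]
      rw [show (1:ℝ) - (1 - x) = x by ring]
    have hf0 : (-1 : ℝ) ^ 0 * ((m' + 1).descFactorial 0 : ℝ)
        * Real.log (1 - x) ^ (m' + 1 - 0) * Li (0 + 1) (1 - x)
        = -(Real.log x * Real.log (1 - x) ^ (m' + 1)) := by
      simp [e0]
      ring
    have hfm : (-1 : ℝ) ^ (m' + 1) * ((m' + 1).descFactorial (m' + 1) : ℝ)
        * Real.log (1 - x) ^ (m' + 1 - (m' + 1)) * Li (m' + 1 + 1) (1 - x)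
        = -((-1 : ℝ) ^ m' * ((m' + 1).factorial : ℝ) * Li (m' + 1 + 1) (1 - x)) := by
      rw [Nat.descFactorial_self, Nat.sub_self, pow_zero, pow_succ]
      ring
    have hterm : ∀ j ∈ Finset.range m',
        (-1 : ℝ) ^ (j + 1) * ((m' + 1).descFactorial (j + 1) : ℝ)
          * Real.log (1 - x) ^ (m' + 1 - (j + 1)) * Li (j + 1 + 1) (1 - x)
        = -((-1 : ℝ) ^ j * poch (((m' + 1 : ℕ) : ℝ) - j) (j + 1)
          * Real.log (1 - x) ^ (m' + 1 - j - 1) * Li (j + 2) (1 - x)) := by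
      intro j hj
      rw [Finset.mem_range] at hj
      rw [poch_descFactorial (m' + 1) j (by omega)]
      rw [show m' + 1 - (j + 1) = m' + 1 - j - 1 from by omega]
      rw [pow_succ]
      ring
    rw [Finset.sum_congr rfl hterm, Finset.sum_neg_distrib]
    rw [hf0, hfm]
    ring
  · rw [subst_lemma, sub_self, key m hm le_rfl one_pos]
    simp [Li_zero_eq]
end

section
/- Let m ≥ 1 be an integer and let x > 0 be a real number. Then ∫₀ˣ log^m(1+t)/t dt = log(x)·log^m(1+x) − (m/(m+1))·log^{m+1}(1+x) + m!·ζ(m+1) − Σ_{i=1}^{m} C(m,i)·i!·log^{m−i}(1+x)·Li_{i+1}(1/(1+x)), where C(m,i) is the binomial coefficient. -/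
open Real Filter Set MeasureTheory Topology

lemma zr_summable {p : ℕ} (hp : 2 ≤ p) : Summable (fun n : ℕ => 1 / (n + 1 : ℝ) ^ p) := by
  have h := (summable_one_div_nat_pow (p := p)).mpr hp
  have := (summable_nat_add_iff (f := fun n : ℕ => 1 / (n : ℝ) ^ p) 1).mpr h
  simpa using this

lemma Li_one {p : ℕ} : Li p 1 = zr p := by simp [Li, zr]

lemma Li_summable {p : ℕ} {y : ℝ} (hy : |y| < 1) :
    Summable (fun n : ℕ => y ^ (n + 1) / (n + 1 : ℝ) ^ p) := by
  have hg : Summable (fun n : ℕ => |y| ^ (n + 1)) :=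
    (summable_geometric_of_lt_one (abs_nonneg y) hy).comp_injective (add_left_injective 1)
  apply Summable.of_norm_bounded hg
  · intro n
    rw [norm_div, norm_pow, norm_pow, Real.norm_eq_abs, Real.norm_eq_abs]
    have h1 : (1:ℝ) ≤ |(n + 1 : ℝ)| ^ p := by
      apply one_le_pow₀
      rw [abs_of_nonneg (by positivity)]
      linarith [Nat.cast_nonneg (α := ℝ) n]
    calc |y| ^ (n+1) / |(n+1:ℝ)| ^ p ≤ |y| ^ (n+1) / 1 :=
          div_le_div_of_nonneg_left (by positivity) one_pos h1
      _ = |y| ^ (n+1) := by rw [div_one]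

lemma Li_one_val {y : ℝ} (hy : |y| < 1) : Li 1 y = -Real.log (1 - y) := by
  rw [Li, ← (Real.hasSum_pow_div_log_of_abs_lt_one hy).tsum_eq]
  congr 1
  funext n
  rw [pow_one]

lemma Li_contOn {p : ℕ} (hp : 2 ≤ p) : ContinuousOn (Li p) (Icc (-1) 1) := by
  apply continuousOn_tsum (u := fun n : ℕ => 1 / (n + 1 : ℝ) ^ p)
  · intro n
    exact ((continuous_pow (n+1)).div_const _).continuousOn
  · exact zr_summable hp
  · intro n y hy
    rw [Real.norm_eq_abs, abs_div, abs_pow]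
    have h1 : |y| ≤ 1 := abs_le.mpr ⟨hy.1, hy.2⟩
    have h2 : |(n + 1 : ℝ) ^ p| = (n + 1 : ℝ) ^ p := abs_of_pos (by positivity)
    rw [h2]
    gcongr
    · exact pow_le_one₀ (abs_nonneg y) h1

lemma Li_hasDerivAt (p : ℕ) {y : ℝ} (h0 : 0 < y) (h1 : y < 1) :
    HasDerivAt (Li (p + 1)) (Li p y / y) y := by
  set r : ℝ := (1 + y) / 2 with hr
  have hr0 : 0 < r := by positivity
  have hr1 : r < 1 := by rw [hr]; linarith
  have hyr : y < r := by rw [hr]; linarith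
  have key : HasDerivAt (fun z => ∑' n : ℕ, z ^ (n + 1) / (n + 1 : ℝ) ^ (p + 1))
      (∑' n : ℕ, y ^ n / (n + 1 : ℝ) ^ p) y := by
    apply hasDerivAt_tsum_of_isPreconnected
      (u := fun n : ℕ => r ^ n)
      (g := fun (n : ℕ) (z : ℝ) => z ^ (n + 1) / (n + 1 : ℝ) ^ (p + 1))
      (g' := fun (n : ℕ) (z : ℝ) => z ^ n / (n + 1 : ℝ) ^ p)
      (summable_geometric_of_lt_one hr0.le hr1) isOpen_Ioo (isPreconnected_Ioo)
      (y₀ := 0) ?_ ?_ ?_ ?_ ?_ (t := Ioo (-r) r)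
    · intro n z hz
      have h := (hasDerivAt_pow (n + 1) z).div_const ((n + 1 : ℝ) ^ (p + 1))
      refine h.congr_deriv ?_
      have hne : (n + 1 : ℝ) ≠ 0 := by positivity
      rw [pow_succ ((n : ℝ) + 1) p]
      push_cast
      field_simp
    · intro n z hz
      rw [Real.norm_eq_abs, abs_div, abs_pow]
      have h2 : |(n + 1 : ℝ) ^ p| = (n + 1 : ℝ) ^ p := abs_of_pos (by positivity)
      rw [h2]
      have hz1 : |z| ≤ r := by
        rw [abs_le]; exact ⟨(hz.1).le, (hz.2).le⟩
      calc |z| ^ n / (n + 1 : ℝ) ^ p ≤ |z| ^ n / 1 := by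
            apply div_le_div_of_nonneg_left (by positivity) one_pos
            apply one_le_pow₀; linarith [Nat.cast_nonneg (α := ℝ) n]
        _ = |z| ^ n := div_one _
        _ ≤ r ^ n := pow_le_pow_left₀ (abs_nonneg z) hz1 n
    · exact ⟨by linarith, hr0⟩
    · apply summable_of_ne_finset_zero (s := ∅)
      intro n _
      simp
    · exact ⟨by linarith, hyr⟩
  have heq : (∑' n : ℕ, y ^ n / (n + 1 : ℝ) ^ p) = Li p y / y := by
    rw [Li, eq_div_iff (ne_of_gt h0), ← tsum_mul_right]
    congr 1; funext n
    rw [div_mul_eq_mul_div, mul_comm, ← pow_succ']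
  rw [← heq]
  exact key

lemma aux_coeff {m i : ℕ} (hi : i < m) :
    m.choose i * i.factorial * (m - i) = m.choose (i + 1) * (i + 1).factorial := by
  apply Nat.eq_of_mul_eq_mul_right (Nat.factorial_pos (m - i - 1))
  have h1 : m - i = (m - i - 1) + 1 := by omega
  have e1 : m.choose i * i.factorial * (m - i) * (m - i - 1).factorial
      = m.choose i * i.factorial * (m - i).factorial := by
    rw [h1, Nat.factorial_succ, ← h1]; ring
  have e2 : m - i - 1 = m - (i + 1) := by omega
  rw [e1, Nat.choose_mul_factorial_mul_factorial hi.le, e2,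
    Nat.choose_mul_factorial_mul_factorial hi]

lemma Li_one_inv {t : ℝ} (ht : 0 < t) :
    Li 1 (1 / (1 + t)) = Real.log (1 + t) - Real.log t := by
  have h1t : (0:ℝ) < 1 + t := by linarith
  have habs : |1 / (1 + t)| < 1 := by
    rw [abs_of_pos (by positivity)]
    rw [div_lt_one h1t]; linarith
  rw [Li_one_val habs]
  have : 1 - 1 / (1 + t) = t / (1 + t) := by field_simp; ring
  rw [this, Real.log_div (ne_of_gt ht) (ne_of_gt h1t)]
  ring

lemma cont_term1 {m : ℕ} (hm : 1 ≤ m) {x : ℝ} (hx : 0 < x) :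
    ContinuousOn (fun t => Real.log t * Real.log (1 + t) ^ m) (Icc 0 x) := by
  intro t ht
  rcases eq_or_lt_of_le ht.1 with h | h
  · -- t = 0
    rw [← h]
    have hv : Real.log 0 * Real.log (1 + 0) ^ m = 0 := by
      simp
    rw [ContinuousWithinAt, hv]
    have main : Tendsto (fun s => Real.log s * Real.log (1 + s) ^ m) (𝓝[>] (0:ℝ)) (𝓝 0) := by
      have habs : Tendsto (fun s : ℝ => |Real.log s * s ^ (m:ℝ)|)
          (𝓝[>] (0:ℝ)) (𝓝 0) := by
        have h0 : (0:ℝ) < (m:ℝ) := by exact_mod_cast hm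
        have := (tendsto_log_mul_rpow_nhdsGT_zero h0).abs
        simpa using this
      apply squeeze_zero_norm' ?_ habs
      filter_upwards [self_mem_nhdsWithin] with s hs
      have hs0 : (0:ℝ) < s := hs
      have hL1 : 0 ≤ Real.log (1 + s) := Real.log_nonneg (by linarith)
      have hL2 : Real.log (1 + s) ≤ s := by
        have := Real.log_le_sub_one_of_pos (show (0:ℝ) < 1 + s by linarith)
        simpa using this
      rw [Real.norm_eq_abs, abs_mul, abs_mul, Real.rpow_natCast,
        abs_of_nonneg (pow_nonneg hL1 m)]
      exact mul_le_mul_of_nonneg_left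
        ((pow_le_pow_left₀ hL1 hL2 m).trans (le_abs_self _)) (abs_nonneg _)
    have hmono : 𝓝[Icc 0 x] (0:ℝ) ≤ 𝓝[Ici 0] 0 := nhdsWithin_mono _ Icc_subset_Ici_self
    apply Tendsto.mono_left ?_ hmono
    rw [← Set.Ioi_insert, nhdsWithin_insert]
    rw [tendsto_sup]
    constructor
    · have := tendsto_pure_nhds (fun s => Real.log s * Real.log (1 + s) ^ m) (0:ℝ)
      rwa [hv] at this
    · exact main
  · -- t > 0
    apply ContinuousAt.continuousWithinAt
    apply ContinuousAt.mul (Real.continuousAt_log (ne_of_gt h))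
    apply ContinuousAt.pow
    exact (Real.continuousAt_log (by linarith)).comp
      ((continuous_const.add continuous_id).continuousAt)

lemma G_hasDerivAt {m : ℕ} (hm : 1 ≤ m) {t : ℝ} (ht : 0 < t) :
    HasDerivAt (fun s => Real.log s * Real.log (1 + s) ^ m
      - ((m : ℝ) / (m + 1)) * Real.log (1 + s) ^ (m + 1)
      + (m.factorial : ℝ) * zr (m + 1)
      - ∑ i ∈ Finset.Icc 1 m, (m.choose i : ℝ) * (i.factorial : ℝ)
          * Real.log (1 + s) ^ (m - i) * Li (i + 1) (1 / (1 + s)))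
      (Real.log (1 + t) ^ m / t) t := by
  obtain ⟨k, rfl⟩ : ∃ k, m = k + 1 := ⟨m - 1, (Nat.succ_pred_eq_of_pos hm).symm⟩
  have h1t : (0:ℝ) < 1 + t := by linarith
  set yv : ℝ := 1 / (1 + t) with hyv
  have hy0 : 0 < yv := by positivity
  have hy1 : yv < 1 := by rw [hyv, div_lt_one h1t]; linarith
  set L : ℝ → ℝ := fun s => Real.log (1 + s) with hLdef
  -- derivative of log
  have hlog : HasDerivAt Real.log t⁻¹ t := Real.hasDerivAt_log (ne_of_gt ht)
  -- derivative of L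
  have hL' : HasDerivAt L (1 + t)⁻¹ t := by
    have := (Real.hasDerivAt_log (ne_of_gt h1t)).comp t ((hasDerivAt_id t).const_add 1)
    simp at this
    exact this
  -- derivative of inner map
  have hinv : HasDerivAt (fun s : ℝ => 1 / (1 + s)) (-1 / (1 + t) ^ 2) t := by
    have := ((hasDerivAt_id t).const_add 1).inv (ne_of_gt h1t)
    simp [one_div] at this ⊢
    exact this
  -- derivative of the Li terms
  have hLi : ∀ i : ℕ, HasDerivAt (fun s => Li (i + 1) (1 / (1 + s)))
      (-(Li i yv / (1 + t))) t := by
    intro i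
    have h := (Li_hasDerivAt i hy0 hy1).comp t hinv
    refine h.congr_deriv ?_
    rw [hyv]
    field_simp
  -- the full sum and its derivative
  set c : ℕ → ℝ := fun i => ((k+1).choose i : ℝ) * (i.factorial : ℝ) with hc
  have hsum : HasDerivAt (fun s => ∑ i ∈ Finset.Icc 1 (k+1),
      c i * L s ^ (k + 1 - i) * Li (i + 1) (1 / (1 + s)))
      (∑ i ∈ Finset.Icc 1 (k+1),
        (c i * ((k + 1 - i : ℕ) * L t ^ (k + 1 - i - 1) * (1 + t)⁻¹) * Li (i+1) yv
          + c i * L t ^ (k + 1 - i) * (-(Li i yv / (1 + t))))) t := by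
    apply HasDerivAt.fun_sum
    intro i _
    have h1 : HasDerivAt (fun s => c i * L s ^ (k + 1 - i))
        (c i * ((k + 1 - i : ℕ) * L t ^ (k + 1 - i - 1) * (1 + t)⁻¹)) t :=
      (hL'.pow (k + 1 - i)).const_mul (c i)
    exact h1.mul (hLi i)
  -- telescoping
  set F : ℕ → ℝ := fun j =>
    (if j ≤ k + 1 then ((k+1).choose j : ℝ) * (j.factorial : ℝ) else 0)
      * L t ^ (k + 1 - j) * Li j yv with hF
  have hstep : ∀ i ∈ Finset.Icc 1 (k+1),
      (c i * ((k + 1 - i : ℕ) * L t ^ (k + 1 - i - 1) * (1 + t)⁻¹) * Li (i+1) yv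
        + c i * L t ^ (k + 1 - i) * (-(Li i yv / (1 + t))))
      = (F (i+1) - F i) * (1 + t)⁻¹ := by
    intro i hi
    rw [Finset.mem_Icc] at hi
    have hFi : F i = c i * L t ^ (k + 1 - i) * Li i yv := by
      simp only [hF, hc, if_pos hi.2]
    rcases eq_or_lt_of_le hi.2 with he | hlt
    · subst he
      have hF2 : F (k + 1 + 1) = 0 := by
        simp only [hF]; rw [if_neg (by omega)]; ring
      rw [hF2, hFi]
      simp only [Nat.sub_self, pow_zero, Nat.cast_zero]
      field_simp
      ring
    · have hcoef : (((k+1).choose (i+1) : ℕ) : ℝ) * (((i+1).factorial : ℕ) : ℝ)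
          = c i * ((k + 1 - i : ℕ) : ℝ) := by
        simp only [hc]
        exact_mod_cast (aux_coeff hlt).symm
      have hexp : k + 1 - (i + 1) = k + 1 - i - 1 := by omega
      have hF2 : F (i + 1) = c i * ((k + 1 - i : ℕ) : ℝ) * L t ^ (k + 1 - i - 1)
          * Li (i+1) yv := by
        simp only [hF]
        rw [if_pos (show i + 1 ≤ k + 1 from hlt), hexp, hcoef]
      rw [hF2, hFi]
      field_simp
      ring
  have hsumval : (∑ i ∈ Finset.Icc 1 (k+1),
      (c i * ((k + 1 - i : ℕ) * L t ^ (k + 1 - i - 1) * (1 + t)⁻¹) * Li (i+1) yv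
        + c i * L t ^ (k + 1 - i) * (-(Li i yv / (1 + t)))))
      = (-(F 1)) * (1 + t)⁻¹ := by
    rw [Finset.sum_congr rfl hstep, ← Finset.sum_mul]
    congr 1
    have h1 : ∑ i ∈ Finset.Icc 1 (k+1), (F (i+1) - F i)
        = ∑ i ∈ Finset.range (k+1), (F (1 + i + 1) - F (1 + i)) := by
      have he2 : k + 1 + 1 - 1 = k + 1 := by omega
      rw [← Finset.Ico_add_one_right_eq_Icc, Finset.sum_Ico_eq_sum_range, he2]
    rw [h1, Finset.sum_congr rfl (fun i _ => by rw [Nat.add_comm 1 i]),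
      Finset.sum_range_sub (fun j => F (j+1)) (k+1)]
    have hFtop : F (k + 1 + 1) = 0 := by
      simp only [hF]; rw [if_neg (by omega)]; ring
    rw [hFtop]
    ring
  -- value of F 1
  have hLi1 : Li 1 yv = L t - Real.log t := by
    rw [hyv]; exact Li_one_inv ht
  have hF1 : F 1 = ((k:ℝ) + 1) * L t ^ k * (L t - Real.log t) := by
    simp only [hF]
    rw [if_pos (by omega), Nat.choose_one_right, Nat.factorial_one, hLi1]
    simp only [Nat.add_sub_cancel, Nat.cast_one, mul_one]
    push_cast
    ring
  -- assemble
  have ha : HasDerivAt (fun s => Real.log s * L s ^ (k+1))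
      (t⁻¹ * L t ^ (k+1) + Real.log t * ((k + 1 : ℕ) * L t ^ (k + 1 - 1) * (1 + t)⁻¹)) t :=
    hlog.mul (hL'.pow (k+1))
  have hb : HasDerivAt (fun s => (((k+1 : ℕ) : ℝ) / (((k+1 : ℕ) : ℝ) + 1)) * L s ^ (k+1+1))
      ((((k+1 : ℕ) : ℝ) / (((k+1 : ℕ) : ℝ) + 1))
        * ((k + 1 + 1 : ℕ) * L t ^ (k + 1 + 1 - 1) * (1 + t)⁻¹)) t :=
    (hL'.pow (k+1+1)).const_mul _
  have hbig := ((ha.sub hb).add_const (((k+1).factorial : ℝ) * zr (k+1+1))).sub hsum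
  have hfinal : (t⁻¹ * L t ^ (k+1) + Real.log t * ((k + 1 : ℕ) * L t ^ (k + 1 - 1) * (1 + t)⁻¹))
      - (((k+1 : ℕ) : ℝ) / (((k+1 : ℕ) : ℝ) + 1))
        * ((k + 1 + 1 : ℕ) * L t ^ (k + 1 + 1 - 1) * (1 + t)⁻¹)
      - (∑ i ∈ Finset.Icc 1 (k+1),
        (c i * ((k + 1 - i : ℕ) * L t ^ (k + 1 - i - 1) * (1 + t)⁻¹) * Li (i+1) yv
          + c i * L t ^ (k + 1 - i) * (-(Li i yv / (1 + t)))))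
      = L t ^ (k+1) / t := by
    rw [hsumval, hF1]
    simp only [Nat.add_sub_cancel]
    have hpow : L t ^ (k+1) = L t ^ k * L t := pow_succ _ _
    rw [hpow]
    push_cast
    field_simp
    ring
  exact hfinal ▸ hbig

theorem stmt1 (m : ℕ) (hm : 1 ≤ m) (x : ℝ) (hx : 0 < x) :
    (∫ t in (0:ℝ)..x, (Real.log (1 + t)) ^ m / t) =
      Real.log x * (Real.log (1 + x)) ^ m
      - ((m : ℝ) / (m + 1)) * (Real.log (1 + x)) ^ (m + 1)
      + (m.factorial : ℝ) * zr (m + 1)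
      - ∑ i ∈ Finset.Icc 1 m, (m.choose i : ℝ) * (i.factorial : ℝ)
          * (Real.log (1 + x)) ^ (m - i) * Li (i + 1) (1 / (1 + x)) := by
  set G : ℝ → ℝ := fun s => Real.log s * Real.log (1 + s) ^ m
      - ((m : ℝ) / (m + 1)) * Real.log (1 + s) ^ (m + 1)
      + (m.factorial : ℝ) * zr (m + 1)
      - ∑ i ∈ Finset.Icc 1 m, (m.choose i : ℝ) * (i.factorial : ℝ)
          * Real.log (1 + s) ^ (m - i) * Li (i + 1) (1 / (1 + s)) with hG
  -- continuity of G on [0, x]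
  have hLcont : ContinuousOn (fun s : ℝ => Real.log (1 + s)) (Icc 0 x) := by
    intro s hs
    exact (((Real.continuousAt_log (by linarith [hs.1] : (1:ℝ) + s ≠ 0)).comp
      ((continuous_const.add continuous_id).continuousAt))).continuousWithinAt
  have hinnercont : ContinuousOn (fun s : ℝ => 1 / (1 + s)) (Icc 0 x) := by
    apply ContinuousOn.div continuousOn_const
      (continuous_const.add continuous_id).continuousOn
    intro s hs
    have := hs.1
    intro h; simp at h; linarith
  have hmaps : MapsTo (fun s : ℝ => 1 / (1 + s)) (Icc 0 x) (Icc (-1) 1) := by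
    intro s hs
    have h1 : (0:ℝ) < 1 + s := by linarith [hs.1]
    constructor
    · have : (0:ℝ) ≤ 1 / (1 + s) := by positivity
      linarith
    · rw [div_le_one h1]; linarith [hs.1]
  have hGcont : ContinuousOn G (Icc 0 x) := by
    rw [hG]
    apply ContinuousOn.sub
    apply ContinuousOn.add
    apply ContinuousOn.sub (cont_term1 hm hx)
    · exact continuousOn_const.mul (hLcont.pow (m+1))
    · exact continuousOn_const
    · apply continuousOn_finset_sum
      intro i hi
      rw [Finset.mem_Icc] at hi
      have h2i : 2 ≤ i + 1 := by omega
      exact (continuousOn_const.mul (hLcont.pow (m - i))).mul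
        ((Li_contOn h2i).comp hinnercont hmaps)
  -- derivative
  have hGderiv : ∀ t ∈ Ioo (0:ℝ) x,
      HasDerivWithinAt G (Real.log (1 + t) ^ m / t) (Ioi t) t := by
    intro t ht
    rw [hG]
    exact (G_hasDerivAt hm ht.1).hasDerivWithinAt
  -- integrability
  have hint : IntervalIntegrable (fun t => Real.log (1 + t) ^ m / t) volume 0 x := by
    rw [intervalIntegrable_iff_integrableOn_Ioc_of_le hx.le]
    apply Measure.integrableOn_of_bounded (M := max 1 x ^ (m - 1))
    · exact (measure_Ioc_lt_top).ne
    · apply Measurable.aestronglyMeasurable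
      exact ((Real.measurable_log.comp (measurable_const.add measurable_id)).pow_const m).div
        measurable_id
    · rw [ae_restrict_iff' measurableSet_Ioc]
      apply Eventually.of_forall
      intro t ht
      have ht0 : 0 < t := ht.1
      have h1t : (0:ℝ) < 1 + t := by linarith
      have hL0 : 0 ≤ Real.log (1 + t) := Real.log_nonneg (by linarith)
      have hLt : Real.log (1 + t) ≤ t := by
        have := Real.log_le_sub_one_of_pos h1t
        simpa using this
      rw [Real.norm_eq_abs, abs_div, abs_of_nonneg (pow_nonneg hL0 m),
        abs_of_pos ht0, div_le_iff₀ ht0]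
      calc Real.log (1 + t) ^ m ≤ t ^ m := pow_le_pow_left₀ hL0 hLt m
        _ = t ^ (m - 1) * t := by
          rw [← pow_succ]
          congr 1
          omega
        _ ≤ max 1 x ^ (m - 1) * t := by
          apply mul_le_mul_of_nonneg_right _ ht0.le
          apply pow_le_pow_left₀ ht0.le
          exact le_max_of_le_right ht.2
  -- FTC
  have key : (∫ t in (0:ℝ)..x, Real.log (1 + t) ^ m / t) = G x - G 0 :=
    intervalIntegral.integral_eq_sub_of_hasDeriv_right_of_le hx.le hGcont hGderiv hint
  -- value at 0
  have hG0 : G 0 = 0 := by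
    rw [hG]
    have hsum0 : ∑ i ∈ Finset.Icc 1 m, (m.choose i : ℝ) * (i.factorial : ℝ)
        * Real.log (1 + 0) ^ (m - i) * Li (i + 1) (1 / (1 + 0))
        = (m.factorial : ℝ) * zr (m + 1) := by
      rw [Finset.sum_eq_single m]
      · simp [Li_one]
      · intro i hi hne
        rw [Finset.mem_Icc] at hi
        have : Real.log (1 + (0:ℝ)) ^ (m - i) = 0 := by
          rw [show (1:ℝ) + 0 = 1 by ring, Real.log_one]
          exact zero_pow (by omega)
        rw [this]; ring
      · intro h
        exact absurd (Finset.mem_Icc.mpr ⟨hm, le_refl m⟩) h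
    simp only [hsum0]
    rw [show (1:ℝ) + 0 = 1 by ring, Real.log_zero, Real.log_one]
    rw [zero_pow (by omega : m ≠ 0)]
    ring
  rw [key, hG0, hG]
  ring
end

section
/- Let m, n be integers with m ≥ n ≥ 2 and let x be a real number with 0 < x < 1. Write A(r,s,y) := ∫₀^y log^r(1−t)/t^s dt. For 0 ≤ y ≤ n−2, let T_y be the set of integer chains (i_0, i_1, …, i_y) with i_0 = n and i_{j−1} > i_j ≥ 2 for 1 ≤ j ≤ y (for y = 0 the chain is the single entry i_0 = n), and for such a chain set W := ∏_{j=0}^{y} 1/(i_j − 1). Then A(m,n,x) = Σ_{y=0}^{n−2} C(m,y)·y!·(−1)^{y+1} Σ_{(i_0,…,i_y)∈T_y} W·log^{m−y}(1−x)/x^{i_y−1} + Σ_{y=0}^{n−2} C(m,y)·y!·(−1)^{y} Σ_{(i_0,…,i_y)∈T_y} W·log^{m−y}(1−x) + Σ_{y=0}^{n−2} C(m,y+1)·(y+1)!·(−1)^{y+1} Σ_{(i_0,…,i_y)∈T_y} W·A(m−y−1,1,x), where C(m,y) denotes the binomial coefficient. -/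
/-- `A r s y = ∫₀^y log^r(1-t)/t^s dt`. -/
noncomputable def Aint (r s : ℕ) (y : ℝ) : ℝ := ∫ t in (0:ℝ)..y, (Real.log (1 - t)) ^ r / t ^ s

/-- `chainSum f n y = Σ_{(i_0,…,i_y) ∈ T_y} (∏_{j=0}^y 1/(i_j-1)) · f i_y`, the sum over all
integer chains `i_0 = n > i_1 > ⋯ > i_y` with `i_j ≥ 2` for `1 ≤ j ≤ y`. -/
noncomputable def chainSum (f : ℕ → ℝ) : ℕ → ℕ → ℝ
  | n, 0 => (1 / ((n : ℝ) - 1)) * f n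
  | n, y + 1 => (1 / ((n : ℝ) - 1)) * ∑ i ∈ Finset.Icc 2 (n - 1), chainSum f i y

open Real Filter Set Topology

noncomputable def qfun : ℝ → ℝ := fun t => if t = 0 then (-1:ℝ) else Real.log (1-t)/t

lemma qfun_contAt_zero : ContinuousAt qfun 0 := by
  rw [← continuousWithinAt_compl_self]
  have hd : HasDerivAt (fun t : ℝ => Real.log (1 - t)) (-1) 0 := by
    have h1 : HasDerivAt (fun t : ℝ => 1 - t) (-1) 0 := by
      exact ((hasDerivAt_const (0:ℝ) (1:ℝ)).sub (hasDerivAt_id' 0)).congr_deriv (by norm_num)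
    have := (Real.hasDerivAt_log (by norm_num : (1:ℝ) - 0 ≠ 0)).comp 0 h1
    exact this.congr_deriv (by norm_num)
  have := hasDerivAt_iff_tendsto_slope.mp hd
  have heq : ∀ t : ℝ, t ≠ 0 → slope (fun t : ℝ => Real.log (1 - t)) 0 t = qfun t := by
    intro t ht
    simp [slope, qfun, ht, sub_zero]
    ring
  unfold ContinuousWithinAt
  have : qfun 0 = -1 := by simp [qfun]
  rw [this]
  refine (hasDerivAt_iff_tendsto_slope.mp hd).congr' ?_
  filter_upwards [self_mem_nhdsWithin] with t ht
  exact heq t ht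

lemma qfun_contAt {t : ℝ} (ht : t < 1) : ContinuousAt qfun t := by
  rcases eq_or_ne t 0 with rfl | h0
  · exact qfun_contAt_zero
  · have : ContinuousAt (fun t : ℝ => Real.log (1-t)/t) t := by
      exact ((Real.continuousAt_log (by simp; linarith)).comp
        ((continuous_const.sub continuous_id).continuousAt)).div continuousAt_id h0
      
    refine this.congr ?_
    filter_upwards [isOpen_ne.mem_nhds h0] with u hu
    simp [qfun, hu]

lemma integrand_eq {r s : ℕ} (hrs : s ≤ r) {t : ℝ} (h0 : t ≠ 0) :
    (Real.log (1 - t)) ^ r / t ^ s = (Real.log (1-t))^(r-s) * (qfun t)^s := by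
  simp only [qfun, h0, if_false, div_pow]
  have h : (Real.log (1-t))^(r-s) * (Real.log (1-t))^s = (Real.log (1-t))^r := by
    rw [← pow_add, Nat.sub_add_cancel hrs]
  field_simp
  linear_combination -h

lemma G_contOn {r s : ℕ} {b : ℝ} (hb : b < 1) :
    ContinuousOn (fun t => (Real.log (1-t))^(r-s) * (qfun t)^s) (Icc 0 b) := by
  intro t ht
  exact (((Real.continuousAt_log (by nlinarith [ht.2] : (1:ℝ) - t ≠ 0)).comp
    ((continuous_const.sub continuous_id).continuousAt)).pow _ |>.mul
    ((qfun_contAt (lt_of_le_of_lt ht.2 hb)).pow _)).continuousWithinAt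

lemma integrand_intervalIntegrable {r s : ℕ} (hrs : s ≤ r) {b : ℝ} (hb0 : 0 ≤ b) (hb : b < 1) :
    IntervalIntegrable (fun t => (Real.log (1 - t)) ^ r / t ^ s) MeasureTheory.volume 0 b := by
  rw [intervalIntegrable_iff, uIoc_of_le hb0]
  have hG : MeasureTheory.IntegrableOn
      (fun t => (Real.log (1-t))^(r-s) * (qfun t)^s) (Icc 0 b) := by
    exact (G_contOn hb).integrableOn_Icc
  refine (hG.mono_set Ioc_subset_Icc_self).congr_fun ?_ measurableSet_Ioc
  intro t ht
  exact (integrand_eq hrs (ne_of_gt ht.1)).symm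

lemma integrand_measurable {r s : ℕ} :
    Measurable (fun t : ℝ => (Real.log (1 - t)) ^ r / t ^ s) :=
  ((Real.measurable_log.comp (measurable_const.sub measurable_id)).pow_const r).div
    (measurable_id.pow_const s)

lemma integrand_contAt {r s : ℕ} {x : ℝ} (hx0 : 0 < x) (hx1 : x < 1) :
    ContinuousAt (fun t : ℝ => (Real.log (1 - t)) ^ r / t ^ s) x := by
  exact (((Real.continuousAt_log (by simp; linarith)).comp
    ((continuous_const.sub continuous_id).continuousAt)).pow _).div
    (continuousAt_id.pow _) (by positivity)

lemma Aint_hasDerivAt {r s : ℕ} (hrs : s ≤ r) {x : ℝ} (hx0 : 0 < x) (hx1 : x < 1) :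
    HasDerivAt (Aint r s) ((Real.log (1-x))^r / x^s) x := by
  exact intervalIntegral.integral_hasDerivAt_right
    (integrand_intervalIntegrable hrs hx0.le hx1)
    (integrand_measurable.stronglyMeasurable.stronglyMeasurableAtFilter)
    (integrand_contAt hx0 hx1)

lemma Aint_tendsto_zero {r s : ℕ} (hrs : s ≤ r) :
    Tendsto (Aint r s) (𝓝[>] (0:ℝ)) (𝓝 0) := by
  obtain ⟨C, hC⟩ := (isCompact_Icc (a := (0:ℝ)) (b := 1/2)).exists_bound_of_continuousOn
    (G_contOn (r := r) (s := s) (by norm_num))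
  have hbound : ∀ x ∈ Ioc (0:ℝ) (1/2), ‖Aint r s x‖ ≤ C * |x| := by
    intro x hx
    have := intervalIntegral.norm_integral_le_of_norm_le_const
      (f := fun t => (Real.log (1 - t)) ^ r / t ^ s) (a := 0) (b := x) (C := C) ?_
    · simpa [Aint] using this
    · intro t ht
      rw [uIoc_of_le hx.1.le] at ht
      rw [integrand_eq hrs (ne_of_gt ht.1)]
      exact hC t ⟨ht.1.le, le_trans ht.2 hx.2⟩
  have htend : Tendsto (fun x : ℝ => C * |x|) (𝓝[>] 0) (𝓝 0) := by
    have : Tendsto (fun x : ℝ => C * |x|) (𝓝 0) (𝓝 (C * |0|)) :=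
      (continuous_const.mul (continuous_abs)).tendsto 0
    simpa using this.mono_left nhdsWithin_le_nhds
  refine squeeze_zero_norm' ?_ htend
  filter_upwards [Ioc_mem_nhdsGT_of_mem (by norm_num : (0:ℝ) ∈ Ico (0:ℝ) (1/2))] with x hx
  exact hbound x hx

lemma logpow_tendsto {p q : ℕ} (hpq : p < q) :
    Tendsto (fun x : ℝ => (Real.log (1-x))^q / x^p) (𝓝[>] (0:ℝ)) (𝓝 0) := by
  have h1 : Tendsto (fun x : ℝ => (Real.log (1-x))^(q-p)) (𝓝 (0:ℝ)) (𝓝 0) := by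
    have hc : ContinuousAt (fun x : ℝ => (Real.log (1-x))^(q-p)) 0 :=
      (((Real.continuousAt_log (by norm_num)).comp
        ((continuous_const.sub continuous_id).continuousAt)).pow _)
    simpa [Real.log_one, zero_pow (Nat.sub_ne_zero_of_lt hpq)] using hc.tendsto
  have h2 : Tendsto (fun x : ℝ => (qfun x)^p) (𝓝 (0:ℝ)) (𝓝 ((-1:ℝ)^p)) := by
    have := (qfun_contAt_zero.pow p).tendsto
    convert this using 2
    rw [Pi.pow_apply]
    simp [qfun]
  have h3 : Tendsto (fun x : ℝ => (Real.log (1-x))^(q-p) * (qfun x)^p) (𝓝[>] (0:ℝ))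
      (𝓝 (0 * (-1:ℝ)^p)) :=
    (h1.mono_left nhdsWithin_le_nhds).mul (h2.mono_left nhdsWithin_le_nhds)
  rw [zero_mul] at h3
  refine Filter.Tendsto.congr' ?_ h3
  filter_upwards [self_mem_nhdsWithin] with x hx
  exact (integrand_eq hpq.le (ne_of_gt hx)).symm

lemma invsum {x : ℝ} (hx0 : x ≠ 0) (hx1 : x ≠ 1) (p : ℕ) :
    ∑ k ∈ Finset.Icc 1 p, ((x:ℝ)^k)⁻¹ = (1 - x^p)/((1-x)*x^p) := by
  induction p with
  | zero => simp
  | succ p ih =>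
    rw [Finset.sum_Icc_succ_top (by omega : 1 ≤ p + 1), ih]
    have h1 : (1:ℝ) - x ≠ 0 := by intro h; apply hx1; linarith
    field_simp
    ring

lemma hasDerivAt_logpow {m : ℕ} {z : ℝ} (hz1 : z < 1) :
    HasDerivAt (fun z : ℝ => (Real.log (1-z))^m)
      (m * (Real.log (1-z))^(m-1) * (-(1-z)⁻¹)) z := by
  have h1 : HasDerivAt (fun t : ℝ => 1 - t) (-1) z := by
    exact ((hasDerivAt_const z (1:ℝ)).sub (hasDerivAt_id' z)).congr_deriv (by norm_num)
  have hL : HasDerivAt (fun t : ℝ => Real.log (1 - t)) (-(1-z)⁻¹) z := by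
    have := (Real.hasDerivAt_log (by linarith : (1:ℝ) - z ≠ 0)).comp z h1
    exact this.congr_deriv (by ring)
  exact hL.pow m

lemma L1 (m n : ℕ) (hn : 2 ≤ n) (hmn : n ≤ m) {x : ℝ} (hx0 : 0 < x) (hx1 : x < 1) :
    ((n:ℝ) - 1) * Aint m n x = -(Real.log (1-x))^m / x^(n-1) + (Real.log (1-x))^m
      - m * ∑ k ∈ Finset.Icc 1 (n-1), Aint (m-1) k x := by
  obtain ⟨p, rfl⟩ : ∃ p, n = p + 2 := ⟨n - 2, by omega⟩
  obtain ⟨q, rfl⟩ : ∃ q, m = q + 1 := ⟨m - 1, by omega⟩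
  set D : ℝ → ℝ := fun z => ((p:ℝ)+1) * Aint (q+1) (p+2) z
      + (Real.log (1-z))^(q+1) / z^(p+1) - (Real.log (1-z))^(q+1)
      + (q+1) * ∑ k ∈ Finset.Icc 1 (p+1), Aint q k z with hDdef
  have hD : ∀ z ∈ Ioo (0:ℝ) 1, HasDerivAt D 0 z := by
    intro z hz
    obtain ⟨hz0, hz1⟩ := hz
    have hzne : z ≠ 0 := ne_of_gt hz0
    have hune : (1:ℝ) - z ≠ 0 := by linarith
    have hA : HasDerivAt (Aint (q+1) (p+2)) ((Real.log (1-z))^(q+1) / z^(p+2)) z :=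
      Aint_hasDerivAt (by omega) hz0 hz1
    have hLm : HasDerivAt (fun z : ℝ => (Real.log (1-z))^(q+1))
        ((q+1) * (Real.log (1-z))^q * (-(1-z)⁻¹)) z := by
      simpa using hasDerivAt_logpow (m := q+1) hz1
    have hzp : HasDerivAt (fun z : ℝ => z^(p+1)) ((p+1) * z^p) z := by
      simpa using hasDerivAt_pow (p+1) z
    have hQ : HasDerivAt (fun z : ℝ => (Real.log (1-z))^(q+1) / z^(p+1))
        ((((q+1) * (Real.log (1-z))^q * (-(1-z)⁻¹)) * z^(p+1)
          - (Real.log (1-z))^(q+1) * ((p+1) * z^p)) / (z^(p+1))^2) z :=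
      hLm.div hzp (by positivity)
    have hS : HasDerivAt (fun z : ℝ => ∑ k ∈ Finset.Icc 1 (p+1), Aint q k z)
        (∑ k ∈ Finset.Icc 1 (p+1), (Real.log (1-z))^q / z^k) z := by
      refine HasDerivAt.fun_sum ?_
      intro k hk
      exact Aint_hasDerivAt (by simp at hk; omega) hz0 hz1
    have hcomb := (((hA.const_mul (((p:ℝ)+1))).add hQ).sub hLm).add (hS.const_mul (((q:ℝ)+1)))
    have hval : ((p:ℝ)+1) * ((Real.log (1-z))^(q+1) / z^(p+2))
        + ((((q+1) * (Real.log (1-z))^q * (-(1-z)⁻¹)) * z^(p+1)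
          - (Real.log (1-z))^(q+1) * ((p+1) * z^p)) / (z^(p+1))^2)
        - ((q+1) * (Real.log (1-z))^q * (-(1-z)⁻¹))
        + ((q:ℝ)+1) * (∑ k ∈ Finset.Icc 1 (p+1), (Real.log (1-z))^q / z^k) = 0 := by
      have hsum : ∑ k ∈ Finset.Icc 1 (p+1), (Real.log (1-z))^q / z^k
          = (Real.log (1-z))^q * ((1 - z^(p+1))/((1-z)*z^(p+1))) := by
        rw [← invsum hzne (by linarith) (p+1), Finset.mul_sum]
        exact Finset.sum_congr rfl (fun k _ => by rw [div_eq_mul_inv])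
      rw [hsum]
      have hLpow : (Real.log (1-z))^(q+1) = (Real.log (1-z))^q * Real.log (1-z) := by
        ring
      rw [hLpow]
      field_simp
      ring
    rw [hDdef]
    exact hcomb.congr_deriv hval
  -- constancy on [a, x] for 0 < a < x
  have hconst : ∀ a, 0 < a → a < x → D x = D a := by
    intro a ha hax
    have hsub : Icc a x ⊆ Ioo 0 1 := fun z hz => ⟨lt_of_lt_of_le ha hz.1, lt_of_le_of_lt hz.2 hx1⟩
    have hcont : ContinuousOn D (Icc a x) := fun z hz =>
      ((hD z (hsub hz)).differentiableAt.continuousAt).continuousWithinAt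
    have hderiv : ∀ z ∈ Ico a x, HasDerivWithinAt D 0 (Ici z) z := fun z hz =>
      (hD z (hsub ⟨hz.1, hz.2.le⟩)).hasDerivWithinAt
    exact constant_of_has_deriv_right_zero hcont hderiv x (right_mem_Icc.mpr hax.le)
  have htend : Tendsto D (𝓝[>] (0:ℝ)) (𝓝 0) := by
    have t1 : Tendsto (fun z => ((p:ℝ)+1) * Aint (q+1) (p+2) z) (𝓝[>] (0:ℝ)) (𝓝 (((p:ℝ)+1) * 0)) :=
      (Aint_tendsto_zero (by omega)).const_mul _
    have t2 : Tendsto (fun z : ℝ => (Real.log (1-z))^(q+1) / z^(p+1)) (𝓝[>] (0:ℝ)) (𝓝 0) :=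
      logpow_tendsto (by omega)
    have t3 : Tendsto (fun z : ℝ => (Real.log (1-z))^(q+1)) (𝓝[>] (0:ℝ)) (𝓝 0) := by
      have := logpow_tendsto (p := 0) (q := q+1) (by omega)
      simpa using this
    have t4 : Tendsto (fun z => ((q:ℝ)+1) * ∑ k ∈ Finset.Icc 1 (p+1), Aint q k z)
        (𝓝[>] (0:ℝ)) (𝓝 (((q:ℝ)+1) * ∑ k ∈ Finset.Icc 1 (p+1), (0:ℝ))) := by
      refine Tendsto.const_mul _ (tendsto_finset_sum _ (fun k hk => ?_))
      exact Aint_tendsto_zero (by simp at hk; omega)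
    have := ((t1.add t2).sub t3).add t4
    simpa [hDdef] using this
  have hxzero : D x = 0 := by
    have hev : ∀ᶠ a in 𝓝[>] (0:ℝ), D a = D x := by
      filter_upwards [Ioo_mem_nhdsGT_of_mem (by constructor <;> linarith : (0:ℝ) ∈ Ico 0 x)]
        with a ha
      exact (hconst a ha.1 ha.2).symm
    have h2 : Tendsto D (𝓝[>] (0:ℝ)) (𝓝 (D x)) :=
      Tendsto.congr' (by filter_upwards [hev] with a ha; exact ha.symm) tendsto_const_nhds
    exact tendsto_nhds_unique h2 htend
  rw [hDdef] at hxzero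
  simp only [] at hxzero
  rw [show p + 2 - 1 = p + 1 from by omega, show q + 1 - 1 = q from by omega, neg_div]
  push_cast
  linarith [hxzero]

lemma chainSum_zero' (f : ℕ → ℝ) (n : ℕ) : chainSum f n 0 = (1 / ((n : ℝ) - 1)) * f n := rfl

lemma chainSum_succ' (f : ℕ → ℝ) (n y : ℕ) :
    chainSum f n (y+1) = (1 / ((n : ℝ) - 1)) * ∑ i ∈ Finset.Icc 2 (n - 1), chainSum f i y := rfl

lemma chainSum_eq_zero (f : ℕ → ℝ) : ∀ (y n : ℕ), 1 ≤ n → n ≤ y + 1 → chainSum f n y = 0 := by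
  intro y
  induction y with
  | zero =>
    intro n h1 h2
    have : n = 1 := by omega
    subst this
    simp [chainSum_zero']
  | succ y ihy =>
    intro n h1 h2
    rw [chainSum_succ']
    rw [Finset.sum_eq_zero, mul_zero]
    intro i hi
    rw [Finset.mem_Icc] at hi
    exact ihy i (by omega) (by omega)

lemma chainSum_top_zero (f : ℕ → ℝ) (p : ℕ) :
    ((p:ℝ)+1) * chainSum f (p+2) 0 = f (p+2) := by
  rw [chainSum_zero']
  have h : ((((p:ℕ)+2):ℕ):ℝ) - 1 = (p:ℝ)+1 := by push_cast; ring
  rw [h]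
  have : (p:ℝ)+1 ≠ 0 := by positivity
  field_simp

lemma chainSum_top_succ (f : ℕ → ℝ) (p y : ℕ) :
    ((p:ℝ)+1) * chainSum f (p+2) (y+1) = ∑ i ∈ Finset.Icc 2 (p+1), chainSum f i y := by
  rw [chainSum_succ']
  have h : ((((p:ℕ)+2):ℕ):ℝ) - 1 = (p:ℝ)+1 := by push_cast; ring
  rw [h, show p+2-1 = p+1 from by omega]
  have : (p:ℝ)+1 ≠ 0 := by positivity
  field_simp

lemma keystep (p : ℕ) (c : ℕ → ℝ) (g : ℕ → ℕ → ℝ) :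
    ((p:ℝ)+1) * ∑ y ∈ Finset.range (p+1), c y * chainSum (g y) (p+2) y
    = c 0 * g 0 (p+2)
      + ∑ i ∈ Finset.Icc 2 (p+1), ∑ y ∈ Finset.range p, c (y+1) * chainSum (g (y+1)) i y := by
  rw [Finset.sum_range_succ', mul_add, add_comm]
  congr 1
  · rw [mul_left_comm, chainSum_top_zero]
  · rw [Finset.mul_sum, Finset.sum_comm]
    refine Finset.sum_congr rfl (fun y _ => ?_)
    rw [mul_left_comm, chainSum_top_succ, Finset.mul_sum]

lemma choose_fact (m y : ℕ) (hm : 1 ≤ m) :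
    (m:ℝ) * ((m-1).choose y) * (y.factorial) = (m.choose (y+1)) * ((y+1).factorial) := by
  have h := Nat.add_one_mul_choose_eq (m-1) y
  rw [Nat.sub_add_cancel hm] at h
  have h2 : m * (m-1).choose y * y.factorial = m.choose (y+1) * (y+1).factorial := by
    rw [h, Nat.factorial_succ]
    ring
  exact_mod_cast congrArg (Nat.cast (R := ℝ)) h2

lemma extend_sum (c : ℕ → ℝ) (g : ℕ → ℕ → ℝ) (i a b : ℕ) (hab : a ≤ b)
    (hia : i ≤ a + 1) (hi1 : 1 ≤ i) :
    ∑ y ∈ Finset.range a, c y * chainSum (g y) i y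
    = ∑ y ∈ Finset.range b, c y * chainSum (g y) i y := by
  refine Finset.sum_subset (Finset.range_subset_range.mpr hab) (fun y _ hy => ?_)
  rw [Finset.mem_range, not_lt] at hy
  rw [chainSum_eq_zero (g y) y i hi1 (by omega), mul_zero]

theorem stmt3 (m n : ℕ) (hn : 2 ≤ n) (hmn : n ≤ m) (x : ℝ) (hx0 : 0 < x) (hx1 : x < 1) :
    Aint m n x =
      (∑ y ∈ Finset.range (n - 1), (m.choose y : ℝ) * (y.factorial : ℝ) * (-1 : ℝ) ^ (y + 1)
        * chainSum (fun i => (Real.log (1 - x)) ^ (m - y) / x ^ (i - 1)) n y)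
      + (∑ y ∈ Finset.range (n - 1), (m.choose y : ℝ) * (y.factorial : ℝ) * (-1 : ℝ) ^ y
        * chainSum (fun _ => (Real.log (1 - x)) ^ (m - y)) n y)
      + (∑ y ∈ Finset.range (n - 1), (m.choose (y + 1) : ℝ) * ((y + 1).factorial : ℝ)
        * (-1 : ℝ) ^ (y + 1) * chainSum (fun _ => Aint (m - y - 1) 1 x) n y) := by
  induction n using Nat.strong_induction_on generalizing m with
  | _ n ih =>
  obtain ⟨p, rfl⟩ : ∃ p, n = p + 2 := ⟨n - 2, by omega⟩
  have hp1 : ((p:ℝ) + 1) ≠ 0 := by positivity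
  have hm1 : 1 ≤ m := by omega
  refine mul_left_cancel₀ hp1 ?_
  have hL1 := L1 m (p+2) (by omega) hmn hx0 hx1
  rw [show ((((p:ℕ)+2):ℕ):ℝ) - 1 = (p:ℝ)+1 by push_cast; ring,
      show (p+2) - 1 = p + 1 from by omega] at hL1
  rw [hL1, show (p+2) - 1 = p + 1 from by omega]
  have k1 : ((p:ℝ)+1) * ∑ y ∈ Finset.range (p+1), (m.choose y : ℝ) * (y.factorial : ℝ)
        * (-1 : ℝ) ^ (y + 1)
        * chainSum (fun i => (Real.log (1 - x)) ^ (m - y) / x ^ (i - 1)) (p+2) y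
      = (m.choose 0 : ℝ) * (Nat.factorial 0 : ℝ) * (-1 : ℝ) ^ (0 + 1)
          * ((Real.log (1 - x)) ^ (m - 0) / x ^ ((p+2) - 1))
        + ∑ i ∈ Finset.Icc 2 (p+1), ∑ y ∈ Finset.range p,
          (m.choose (y+1) : ℝ) * ((y+1).factorial : ℝ) * (-1 : ℝ) ^ (y + 1 + 1)
          * chainSum (fun j => (Real.log (1 - x)) ^ (m - (y+1)) / x ^ (j - 1)) i y :=
    keystep p _ _
  have k2 : ((p:ℝ)+1) * ∑ y ∈ Finset.range (p+1), (m.choose y : ℝ) * (y.factorial : ℝ)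
        * (-1 : ℝ) ^ y * chainSum (fun _ => (Real.log (1 - x)) ^ (m - y)) (p+2) y
      = (m.choose 0 : ℝ) * (Nat.factorial 0 : ℝ) * (-1 : ℝ) ^ 0 * ((Real.log (1 - x)) ^ (m - 0))
        + ∑ i ∈ Finset.Icc 2 (p+1), ∑ y ∈ Finset.range p,
          (m.choose (y+1) : ℝ) * ((y+1).factorial : ℝ) * (-1 : ℝ) ^ (y + 1)
          * chainSum (fun _ => (Real.log (1 - x)) ^ (m - (y+1))) i y :=
    keystep p _ _
  have k3 : ((p:ℝ)+1) * ∑ y ∈ Finset.range (p+1), (m.choose (y+1) : ℝ)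
        * ((y+1).factorial : ℝ) * (-1 : ℝ) ^ (y + 1)
        * chainSum (fun _ => Aint (m - y - 1) 1 x) (p+2) y
      = (m.choose (0+1) : ℝ) * (Nat.factorial (0+1) : ℝ) * (-1 : ℝ) ^ (0 + 1)
          * (Aint (m - 0 - 1) 1 x)
        + ∑ i ∈ Finset.Icc 2 (p+1), ∑ y ∈ Finset.range p,
          (m.choose (y+1+1) : ℝ) * ((y+1+1).factorial : ℝ) * (-1 : ℝ) ^ (y + 1 + 1)
          * chainSum (fun _ => Aint (m - (y+1) - 1) 1 x) i y :=
    keystep p _ _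
  rw [mul_add, mul_add, k1, k2, k3]
  have hsplit : ∑ k ∈ Finset.Icc 1 (p+1), Aint (m-1) k x
      = Aint (m-1) 1 x + ∑ k ∈ Finset.Icc 2 (p+1), Aint (m-1) k x := by
    rw [show Finset.Icc 1 (p+1) = insert 1 (Finset.Icc 2 (p+1)) from by
      ext k; simp [Finset.mem_Icc, Finset.mem_insert]; omega]
    rw [Finset.sum_insert (by simp)]
  rw [hsplit]
  have hmain : ∀ i ∈ Finset.Icc 2 (p+1),
      (∑ y ∈ Finset.range p, (m.choose (y+1) : ℝ) * ((y+1).factorial : ℝ) * (-1:ℝ)^(y+1+1)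
          * chainSum (fun j => (Real.log (1 - x)) ^ (m - (y+1)) / x ^ (j - 1)) i y)
      + (∑ y ∈ Finset.range p, (m.choose (y+1) : ℝ) * ((y+1).factorial : ℝ) * (-1:ℝ)^(y+1)
          * chainSum (fun _ => (Real.log (1 - x)) ^ (m - (y+1))) i y)
      + (∑ y ∈ Finset.range p, (m.choose (y+1+1) : ℝ) * ((y+1+1).factorial : ℝ) * (-1:ℝ)^(y+1+1)
          * chainSum (fun _ => Aint (m - (y+1) - 1) 1 x) i y)
      = -(m:ℝ) * Aint (m-1) i x := by
    intro i hi
    rw [Finset.mem_Icc] at hi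
    have hIH := ih i (by omega) (m-1) (by omega) (by omega)
    rw [hIH]
    rw [extend_sum _ _ i (i-1) p (by omega) (by omega) (by omega),
        extend_sum _ _ i (i-1) p (by omega) (by omega) (by omega),
        extend_sum _ _ i (i-1) p (by omega) (by omega) (by omega)]
    rw [mul_add, mul_add, Finset.mul_sum, Finset.mul_sum, Finset.mul_sum]
    congr 1
    · congr 1
      · refine Finset.sum_congr rfl (fun y _ => ?_)
        rw [show m - (y+1) = m - 1 - y from by omega]
        have hc := choose_fact m y hm1
        linear_combination ((-1:ℝ)^(y+1)
          * chainSum (fun j => (Real.log (1 - x)) ^ (m - 1 - y) / x ^ (j - 1)) i y) * hc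
      · refine Finset.sum_congr rfl (fun y _ => ?_)
        rw [show m - (y+1) = m - 1 - y from by omega]
        have hc := choose_fact m y hm1
        linear_combination ((-1:ℝ)^y
          * chainSum (fun _ => (Real.log (1 - x)) ^ (m - 1 - y)) i y) * hc
    · refine Finset.sum_congr rfl (fun y _ => ?_)
      rw [show m - (y+1) - 1 = m - 1 - y - 1 from by omega]
      have hc := choose_fact m (y+1) hm1
      linear_combination ((-1:ℝ)^(y+1)
        * chainSum (fun _ => Aint (m - 1 - y - 1) 1 x) i y) * hc
  have hcomb : (∑ i ∈ Finset.Icc 2 (p+1), ∑ y ∈ Finset.range p,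
        (m.choose (y+1) : ℝ) * ((y+1).factorial : ℝ) * (-1:ℝ)^(y+1+1)
          * chainSum (fun j => (Real.log (1 - x)) ^ (m - (y+1)) / x ^ (j - 1)) i y)
      + (∑ i ∈ Finset.Icc 2 (p+1), ∑ y ∈ Finset.range p,
        (m.choose (y+1) : ℝ) * ((y+1).factorial : ℝ) * (-1:ℝ)^(y+1)
          * chainSum (fun _ => (Real.log (1 - x)) ^ (m - (y+1))) i y)
      + (∑ i ∈ Finset.Icc 2 (p+1), ∑ y ∈ Finset.range p,
        (m.choose (y+1+1) : ℝ) * ((y+1+1).factorial : ℝ) * (-1:ℝ)^(y+1+1)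
          * chainSum (fun _ => Aint (m - (y+1) - 1) 1 x) i y)
      = -(m:ℝ) * ∑ i ∈ Finset.Icc 2 (p+1), Aint (m-1) i x := by
    rw [Finset.mul_sum, ← Finset.sum_add_distrib, ← Finset.sum_add_distrib]
    exact Finset.sum_congr rfl hmain
  simp only [show (0:ℕ)+1 = 1 from rfl, Nat.sub_zero, Nat.choose_zero_right,
    Nat.choose_one_right, Nat.factorial_zero, Nat.factorial_one,
    show (p+2) - 1 = p + 1 from by omega]
  push_cast at hcomb ⊢
  linear_combination -hcomb
end

section
/- Let m, n be integers with m ≥ n ≥ 2 and let x > 0 be a real number. Write B(r,s,y) := ∫₀^y log^r(1+t)/t^s dt. For 0 ≤ y ≤ n−2, let T_y be the set of integer chains (i_0, i_1, …, i_y) with i_0 = n and i_{j−1} > i_j ≥ 2 for 1 ≤ j ≤ y (for y = 0 the chain is the single entry i_0 = n), and for such a chain set W := ∏_{j=0}^{y} 1/(i_j − 1). Then B(m,n,x) = Σ_{y=0}^{n−2} C(m,y)·y!·Σ_{(i_0,…,i_y)∈T_y} W·(−1)^{n+i_y+y+1}·log^{m−y}(1+x)/x^{i_y−1} + Σ_{y=0}^{n−2}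 C(m,y)·y!·Σ_{(i_0,…,i_y)∈T_y} W·(−1)^{n+y+1}·log^{m−y}(1+x) + Σ_{y=0}^{n−2} C(m,y+1)·(y+1)!·Σ_{(i_0,…,i_y)∈T_y} W·(−1)^{n+y}·B(m−y−1,1,x), where C(m,y) denotes the binomial coefficient. -/
/-- `B r s y = ∫₀^y log^r(1+t)/t^s dt`. -/
noncomputable def Bint (r s : ℕ) (y : ℝ) : ℝ := ∫ t in (0:ℝ)..y, (Real.log (1 + t)) ^ r / t ^ s

open MeasureTheory intervalIntegral Set Filter Topology

lemma log_pow_le {r s : ℕ} (hrs : s ≤ r) {x t : ℝ} (ht : 0 < t) (htx : t ≤ x) :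
    (Real.log (1 + t)) ^ r / t ^ s ≤ (max 1 x) ^ r := by
  have h0 : (0:ℝ) ≤ Real.log (1 + t) := Real.log_nonneg (by linarith)
  have h1 : Real.log (1 + t) ≤ t := by
    have := Real.log_le_sub_one_of_pos (x := 1 + t) (by linarith)
    linarith
  have h2 : (Real.log (1 + t)) ^ r ≤ t ^ r := pow_le_pow_left₀ h0 h1 r
  have h3 : (Real.log (1 + t)) ^ r / t ^ s ≤ t ^ r / t ^ s := by
    apply div_le_div_of_nonneg_right h2 (by positivity) |>.trans_eq rfl
  calc (Real.log (1 + t)) ^ r / t ^ s ≤ t ^ r / t ^ s := h3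
    _ = t ^ (r - s) := by rw [pow_sub₀ t ht.ne' hrs, div_eq_mul_inv]
    _ ≤ (max 1 x) ^ (r - s) := pow_le_pow_left₀ ht.le (le_max_of_le_right htx) _
    _ ≤ (max 1 x) ^ r := pow_le_pow_right₀ (le_max_left 1 x) (Nat.sub_le r s)

lemma integrable_logpow {r s : ℕ} (hrs : s ≤ r) {x : ℝ} (hx : 0 ≤ x) :
    IntervalIntegrable (fun t => (Real.log (1 + t)) ^ r / t ^ s) volume 0 x := by
  rw [intervalIntegrable_iff, uIoc_of_le hx]
  have hmeas : Measurable fun t : ℝ => (Real.log (1 + t)) ^ r / t ^ s :=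
    ((Real.measurable_log.comp (measurable_const.add measurable_id)).pow_const r).div
      (measurable_id.pow_const s)
  refine Integrable.mono' (integrable_const ((max 1 x) ^ r)) hmeas.aestronglyMeasurable ?_
  filter_upwards [ae_restrict_mem measurableSet_Ioc] with t ht
  have h0 : (0:ℝ) ≤ Real.log (1 + t) := Real.log_nonneg (by nlinarith [ht.1])
  have ht1 : (0:ℝ) < t := ht.1
  rw [Real.norm_eq_abs, abs_of_nonneg (div_nonneg (pow_nonneg h0 r) (by positivity))]
  exact log_pow_le hrs ht.1 ht.2

lemma tendsto_tail {f : ℝ → ℝ} {x : ℝ} (hx : 0 ≤ x)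
    (hf : IntervalIntegrable f volume 0 x) :
    Tendsto (fun ε => ∫ t in ε..x, f t) (𝓝[Set.Icc 0 x] 0) (𝓝 (∫ t in (0:ℝ)..x, f t)) := by
  have h := intervalIntegral.continuousOn_primitive_interval' (a := x) hf
    (by rw [Set.uIcc_of_le hx]; exact Set.right_mem_Icc.2 hx)
  have h2 : ContinuousWithinAt (fun b => ∫ t in x..b, f t) (Set.Icc 0 x) 0 := by
    have := h 0 (by rw [Set.uIcc_of_le hx]; exact Set.left_mem_Icc.2 hx)
    rwa [Set.uIcc_of_le hx] at this
  have h3 := h2.neg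
  have h4 : ContinuousWithinAt (fun ε => ∫ t in ε..x, f t) (Set.Icc 0 x) 0 := by
    convert h3 using 1
    funext b
    exact intervalIntegral.integral_symm x b
  exact h4.tendsto

lemma partial_frac (n : ℕ) {t : ℝ} (ht : 0 < t) :
    1 / (t ^ n * (1 + t)) =
      (∑ k ∈ Finset.Icc 1 n, (-1 : ℝ) ^ (n + k) / t ^ k) + (-1 : ℝ) ^ n / (1 + t) := by
  induction n with
  | zero => simp
  | succ n ih =>
    have h1t : (0:ℝ) < 1 + t := by linarith
    have key : 1 / (t ^ (n+1) * (1 + t)) = 1 / t ^ (n+1) - 1 / (t ^ n * (1 + t)) := by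
      field_simp
      ring
    have hflip : ∀ k, ((-1:ℝ)) ^ (n + 1 + k) = -(-1:ℝ) ^ (n + k) := by
      intro k
      have h : n + 1 + k = (n + k) + 1 := by ring
      rw [h, pow_succ]; ring
    have hs : ∑ k ∈ Finset.Icc 1 n, (-1:ℝ) ^ (n + 1 + k) / t ^ k
        = -∑ k ∈ Finset.Icc 1 n, (-1:ℝ) ^ (n + k) / t ^ k := by
      rw [← Finset.sum_neg_distrib]
      exact Finset.sum_congr rfl fun k _ => by rw [hflip k]; ring
    have hnn : ((-1:ℝ)) ^ (n + 1 + (n + 1)) = 1 := by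
      have h : n + 1 + (n + 1) = 2 * (n + 1) := by ring
      rw [h, pow_mul]; norm_num
    rw [key, ih, Finset.sum_Icc_succ_top (by omega : 1 ≤ n + 1), hs, hnn, pow_succ]
    ring

lemma hasDeriv_F (m k : ℕ) (hm : 1 ≤ m) {t : ℝ} (ht : 0 < t) :
    HasDerivAt (fun u => -(1/((k:ℝ)+1)) * ((Real.log (1+u))^m / u^(k+1)))
      ((Real.log (1+t))^m / t^(k+2)
        - ((m:ℝ)/((k:ℝ)+1)) * ((Real.log (1+t))^(m-1) / (t^(k+1) * (1+t)))) t := by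
  have h1t : (0:ℝ) < 1 + t := by linarith
  have hlog : HasDerivAt (fun u : ℝ => Real.log (1+u)) (1/(1+t)) t := by
    have h := (Real.hasDerivAt_log (ne_of_gt h1t)).comp t
      ((hasDerivAt_id t).const_add 1)
    simpa [one_div, Function.comp_def] using h
  have hpow : HasDerivAt (fun u : ℝ => (Real.log (1+u))^m)
      ((m:ℝ) * (Real.log (1+t))^(m-1) * (1/(1+t))) t := hlog.pow m
  have hden : HasDerivAt (fun u : ℝ => u^(k+1)) (((k:ℝ)+1) * t^k) t := by
    simpa using hasDerivAt_pow (k+1) t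
  have hdiv := hpow.div hden (by positivity)
  have h := hdiv.const_mul (-(1/((k:ℝ)+1)))
  refine h.congr_deriv ?_
  obtain ⟨l, rfl⟩ := Nat.exists_eq_add_of_le hm
  have hm1 : 1 + l - 1 = l := by omega
  rw [hm1]
  have hL : Real.log (1+t) ^ (1 + l) = Real.log (1+t) ^ l * Real.log (1+t) := by
    rw [add_comm 1 l, pow_succ]
  rw [hL]
  have htne : t ≠ 0 := ne_of_gt ht
  have h1tne : (1:ℝ) + t ≠ 0 := ne_of_gt h1t
  have hkne : ((k:ℝ)+1) ≠ 0 := by positivity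
  field_simp
  ring

lemma contAt_log1p {t : ℝ} (h : (0:ℝ) < 1+t) : ContinuousAt (fun u : ℝ => Real.log (1+u)) t :=
  (Real.continuousAt_log h.ne').comp (by fun_prop)

lemma contOn_logpow_div (r s : ℕ) {S : Set ℝ} (hS : ∀ t ∈ S, (0:ℝ) < t) :
    ContinuousOn (fun t => (Real.log (1+t))^r / t^s) S := by
  intro t ht
  have h0 : (0:ℝ) < t := hS t ht
  exact (((contAt_log1p (by linarith)).pow r).div (continuousAt_pow _ _ |>.comp
    continuousAt_id |>.congr (by rfl)) (by positivity)).continuousWithinAt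

lemma contOn_g (r s : ℕ) {S : Set ℝ} (hS : ∀ t ∈ S, (0:ℝ) < t) :
    ContinuousOn (fun t => (Real.log (1+t))^r / (t^s * (1+t))) S := by
  intro t ht
  have h0 : (0:ℝ) < t := hS t ht
  refine (((contAt_log1p (by linarith)).pow r).div ?_ (by positivity)).continuousWithinAt
  fun_prop

lemma contOn_h (r : ℕ) {S : Set ℝ} (hS : ∀ t ∈ S, (0:ℝ) < 1+t) :
    ContinuousOn (fun t => (Real.log (1+t))^r / (1+t)) S := by
  intro t ht
  have h0 : (0:ℝ) < 1+t := hS t ht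
  exact (((contAt_log1p h0).pow r).div (by fun_prop) (by positivity)).continuousWithinAt

lemma integral_log_div (r : ℕ) {x : ℝ} (hx : 0 ≤ x) :
    ∫ t in (0:ℝ)..x, (Real.log (1+t))^r / (1+t)
      = (Real.log (1+x))^(r+1) / (r+1) := by
  have key : ∀ t ∈ Set.uIcc (0:ℝ) x,
      HasDerivAt (fun u => (Real.log (1+u))^(r+1) / (r+1))
        ((Real.log (1+t))^r / (1+t)) t := by
    intro t ht
    rw [Set.uIcc_of_le hx] at ht
    have h1t : (0:ℝ) < 1 + t := by have := ht.1; linarith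
    have hlog : HasDerivAt (fun u : ℝ => Real.log (1+u)) (1/(1+t)) t := by
      have h := (Real.hasDerivAt_log (ne_of_gt h1t)).comp t
        ((hasDerivAt_id t).const_add 1)
      simpa [one_div, Function.comp_def] using h
    have h := (hlog.pow (r+1)).div_const ((r:ℝ)+1)
    refine h.congr_deriv ?_
    have : r + 1 - 1 = r := by omega
    rw [this]
    push_cast
    field_simp
  have hint : IntervalIntegrable (fun t => (Real.log (1+t))^r / (1+t)) volume 0 x := by
    apply (contOn_h r ?_).intervalIntegrable
    intro t ht
    rw [Set.uIcc_of_le hx] at ht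
    have := ht.1; linarith
  have := intervalIntegral.integral_eq_sub_of_hasDerivAt key hint
  rw [this]
  simp

lemma recursion (m n : ℕ) (hn : 2 ≤ n) (hmn : n ≤ m) {x : ℝ} (hx : 0 < x) :
    Bint m n x = (1/((n:ℝ)-1)) * (-(Real.log (1+x))^m / x^(n-1))
      + (1/((n:ℝ)-1)) * ((-1:ℝ)^(n+1) * (Real.log (1+x))^m)
      + ((m:ℝ)/((n:ℝ)-1)) * ((-1:ℝ)^n * Bint (m-1) 1 x)
      + ((m:ℝ)/((n:ℝ)-1)) * ∑ j ∈ Finset.Icc 2 (n-1), (-1:ℝ)^(n+j+1) * Bint (m-1) j x := by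
  obtain ⟨k, rfl⟩ : ∃ k, n = k + 2 := ⟨n - 2, by omega⟩
  have hm1 : 1 ≤ m := by omega
  set L : ℝ → ℝ := fun u => Real.log (1+u) with hL
  set f : ℝ → ℝ := fun t => (L t)^m / t^(k+2) with hf
  set g : ℝ → ℝ := fun t => (L t)^(m-1) / (t^(k+1) * (1+t)) with hg
  set F : ℝ → ℝ := fun u => -(1/((k:ℝ)+1)) * ((L u)^m / u^(k+1)) with hF
  -- Step A : FTC on [ε,x]
  have stepA : ∀ ε ∈ Set.Ioo (0:ℝ) x,
      ∫ t in ε..x, f t = F x - F ε + ((m:ℝ)/((k:ℝ)+1)) * ∫ t in ε..x, g t := by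
    intro ε hε
    have hε0 := hε.1
    have hεx := hε.2.le
    have hpos : ∀ t ∈ Set.uIcc ε x, (0:ℝ) < t := by
      intro t ht
      rw [Set.uIcc_of_le hεx] at ht
      exact lt_of_lt_of_le hε0 ht.1
    have hfint : IntervalIntegrable f volume ε x :=
      (contOn_logpow_div m (k+2) hpos).intervalIntegrable
    have hgint : IntervalIntegrable g volume ε x :=
      (contOn_g (m-1) (k+1) hpos).intervalIntegrable
    have key : ∀ t ∈ Set.uIcc ε x,
        HasDerivAt F (f t - ((m:ℝ)/((k:ℝ)+1)) * g t) t := by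
      intro t ht
      exact hasDeriv_F m k hm1 (hpos t ht)
    have hderint : IntervalIntegrable (fun t => f t - ((m:ℝ)/((k:ℝ)+1)) * g t) volume ε x :=
      hfint.sub (hgint.const_mul _)
    have h := intervalIntegral.integral_eq_sub_of_hasDerivAt key hderint
    rw [intervalIntegral.integral_sub hfint (hgint.const_mul _),
      intervalIntegral.integral_const_mul] at h
    linarith [h]
  -- Step B : partial fractions
  have stepB : ∀ ε ∈ Set.Ioo (0:ℝ) x,
      ∫ t in ε..x, g t
        = (∑ j ∈ Finset.Icc 1 (k+1), (-1:ℝ)^(k+1+j) * ∫ t in ε..x, (L t)^(m-1) / t^j)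
          + (-1:ℝ)^(k+1) * ∫ t in ε..x, (L t)^(m-1) / (1+t) := by
    intro ε hε
    have hε0 := hε.1
    have hεx := hε.2.le
    have hpos : ∀ t ∈ Set.uIcc ε x, (0:ℝ) < t := by
      intro t ht
      rw [Set.uIcc_of_le hεx] at ht
      exact lt_of_lt_of_le hε0 ht.1
    have hcong : ∀ t ∈ Set.uIcc ε x,
        g t = (∑ j ∈ Finset.Icc 1 (k+1), (-1:ℝ)^(k+1+j) * ((L t)^(m-1) / t^j))
          + (-1:ℝ)^(k+1) * ((L t)^(m-1) / (1+t)) := by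
      intro t ht
      have htpos := hpos t ht
      have hpf := partial_frac (k+1) htpos
      have hgt : g t = (L t)^(m-1) * (1 / (t^(k+1) * (1+t))) := by
        show (L t)^(m-1) / (t^(k+1) * (1+t)) = _
        rw [div_eq_mul_one_div]
      rw [hgt, hpf, mul_add, Finset.mul_sum]
      congr 1
      · exact Finset.sum_congr rfl fun j _ => by ring
      · ring
    rw [intervalIntegral.integral_congr hcong]
    have hints : ∀ j ∈ Finset.Icc 1 (k+1),
        IntervalIntegrable (fun t => (-1:ℝ)^(k+1+j) * ((L t)^(m-1) / t^j)) volume ε x :=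
      fun j _ => ((contOn_logpow_div (m-1) j hpos).intervalIntegrable).const_mul _
    have hinth : IntervalIntegrable (fun t => (-1:ℝ)^(k+1) * ((L t)^(m-1) / (1+t))) volume ε x := by
      refine ((contOn_h (m-1) ?_).intervalIntegrable).const_mul _
      intro t ht
      have := hpos t ht; linarith
    have hsumint : IntervalIntegrable
        (fun t => ∑ j ∈ Finset.Icc 1 (k+1), (-1:ℝ)^(k+1+j) * ((L t)^(m-1) / t^j)) volume ε x := by
      have heq : (fun t => ∑ j ∈ Finset.Icc 1 (k+1), (-1:ℝ)^(k+1+j) * ((L t)^(m-1) / t^j))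
          = ∑ j ∈ Finset.Icc 1 (k+1), (fun t => (-1:ℝ)^(k+1+j) * ((L t)^(m-1) / t^j)) := by
        funext t; simp
      rw [heq]
      exact IntervalIntegrable.sum _ hints
    rw [intervalIntegral.integral_add hsumint hinth,
      intervalIntegral.integral_finset_sum hints, intervalIntegral.integral_const_mul]
    congr 1
    exact Finset.sum_congr rfl fun j _ => by rw [intervalIntegral.integral_const_mul]
  -- Step C : limits as ε → 0⁺
  set l : Filter ℝ := 𝓝[Set.Ioo (0:ℝ) x] 0 with hldef
  have hlne : l.NeBot := by
    apply mem_closure_iff_nhdsWithin_neBot.1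
    rw [closure_Ioo (ne_of_lt hx)]
    exact ⟨le_refl 0, hx.le⟩
  have hmono : l ≤ 𝓝[Set.Icc 0 x] (0:ℝ) := nhdsWithin_mono 0 Set.Ioo_subset_Icc_self
  have hT1 : Tendsto (fun ε => ∫ t in ε..x, f t) l (𝓝 (Bint m (k+2) x)) :=
    (tendsto_tail hx.le (integrable_logpow (by omega) hx.le)).mono_left hmono
  have hT2 : ∀ j ∈ Finset.Icc 1 (k+1),
      Tendsto (fun ε => ∫ t in ε..x, (L t)^(m-1) / t^j) l (𝓝 (Bint (m-1) j x)) := by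
    intro j hj
    simp only [Finset.mem_Icc] at hj
    exact (tendsto_tail hx.le (integrable_logpow (by omega) hx.le)).mono_left hmono
  have hmcast : ((m:ℝ)) ≠ 0 := Nat.cast_ne_zero.2 (by omega)
  have hT3 : Tendsto (fun ε => ∫ t in ε..x, (L t)^(m-1) / (1+t)) l (𝓝 ((L x)^m / m)) := by
    have hinth0 : IntervalIntegrable (fun t => (L t)^(m-1)/(1+t)) volume 0 x := by
      apply (contOn_h (m-1) ?_).intervalIntegrable
      intro t ht
      rw [Set.uIcc_of_le hx.le] at ht
      linarith [ht.1]
    have h := (tendsto_tail hx.le hinth0).mono_left hmono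
    have heq : (∫ t in (0:ℝ)..x, (L t)^(m-1) / (1+t)) = (L x)^m / m := by
      rw [integral_log_div (m-1) hx.le]
      have h1 : m - 1 + 1 = m := by omega
      have h2 : ((m-1:ℕ):ℝ) + 1 = (m:ℝ) := by
        rw [Nat.cast_sub hm1]; ring
      rw [h1, h2]
    rwa [heq] at h
  have hT4 : Tendsto F l (𝓝 0) := by
    have hsq : Tendsto (fun ε => (L ε)^m / ε^(k+1)) l (𝓝 0) := by
      apply squeeze_zero' (f := fun ε => (L ε)^m / ε^(k+1))
        (g := fun ε => ε * (max 1 x)^m)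
      · filter_upwards [eventually_mem_nhdsWithin] with ε hε
        have h0 : (0:ℝ) ≤ L ε := Real.log_nonneg (by have := hε.1; linarith)
        have := hε.1
        positivity
      · filter_upwards [eventually_mem_nhdsWithin] with ε hε
        obtain ⟨hε0, hεx⟩ := hε
        have h0 : (0:ℝ) ≤ L ε := Real.log_nonneg (by linarith)
        have h1 : L ε ≤ ε := by
          have := Real.log_le_sub_one_of_pos (x := 1 + ε) (by linarith)
          simp only [hL] at *
          linarith
        have h2 : (L ε)^m ≤ ε^m := pow_le_pow_left₀ h0 h1 m
        have h3 : (L ε)^m / ε^(k+1) ≤ ε^m / ε^(k+1) :=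
          div_le_div_of_nonneg_right h2 (by positivity) |>.trans_eq rfl
        have h4 : ε^m / ε^(k+1) = ε^(m-(k+1)) := by
          rw [pow_sub₀ ε (ne_of_gt hε0) (by omega), div_eq_mul_inv]
        have h5 : ∃ d, m - (k+1) = d + 1 := ⟨m - k - 2, by omega⟩
        obtain ⟨d, hd⟩ := h5
        have h6 : ε^(m-(k+1)) = ε * ε^d := by rw [hd, pow_succ]; ring
        have h7 : ε^d ≤ (max 1 x)^d := pow_le_pow_left₀ hε0.le (le_max_of_le_right hεx.le) d
        have h8 : ((max 1 x):ℝ)^d ≤ (max 1 x)^m := pow_le_pow_right₀ (le_max_left 1 x) (by omega)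
        calc (L ε)^m / ε^(k+1) ≤ ε^m / ε^(k+1) := h3
          _ = ε * ε^d := by rw [h4, h6]
          _ ≤ ε * (max 1 x)^m := by nlinarith [hε0.le]
      · have : Tendsto (fun ε : ℝ => ε * (max 1 x)^m) (𝓝 0) (𝓝 (0 * (max 1 x)^m)) :=
          (continuous_id.mul continuous_const).tendsto 0
        simpa using this.mono_left nhdsWithin_le_nhds
    have h5 := hsq.const_mul (-(1/((k:ℝ)+1)))
    rw [mul_zero] at h5
    apply h5.congr
    intro ε
    simp [hF]
  set G : ℝ := (∑ j ∈ Finset.Icc 1 (k+1), (-1:ℝ)^(k+1+j) * Bint (m-1) j x)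
      + (-1:ℝ)^(k+1) * ((L x)^m / m) with hG
  have hTg : Tendsto (fun ε => ∫ t in ε..x, g t) l (𝓝 G) := by
    have h1 : Tendsto (fun ε => (∑ j ∈ Finset.Icc 1 (k+1),
        (-1:ℝ)^(k+1+j) * ∫ t in ε..x, (L t)^(m-1) / t^j)
        + (-1:ℝ)^(k+1) * ∫ t in ε..x, (L t)^(m-1) / (1+t)) l (𝓝 G) := by
      apply Tendsto.add
      · exact tendsto_finset_sum _ fun j hj => (hT2 j hj).const_mul _
      · exact hT3.const_mul _
    apply h1.congr'
    filter_upwards [eventually_mem_nhdsWithin] with ε hε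
    exact (stepB ε hε).symm
  have hRHS : Tendsto (fun ε => F x - F ε + ((m:ℝ)/((k:ℝ)+1)) * ∫ t in ε..x, g t) l
      (𝓝 (F x - 0 + ((m:ℝ)/((k:ℝ)+1)) * G)) :=
    (tendsto_const_nhds.sub hT4).add (hTg.const_mul _)
  have hLHS : Tendsto (fun ε => ∫ t in ε..x, f t) l
      (𝓝 (F x - 0 + ((m:ℝ)/((k:ℝ)+1)) * G)) := by
    apply hRHS.congr'
    filter_upwards [eventually_mem_nhdsWithin] with ε hε
    exact (stepA ε hε).symm
  have hkey : Bint m (k+2) x = F x - 0 + ((m:ℝ)/((k:ℝ)+1)) * G :=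
    tendsto_nhds_unique hT1 hLHS
  -- final algebra
  have hsplit : ∑ j ∈ Finset.Icc 1 (k+1), (-1:ℝ)^(k+1+j) * Bint (m-1) j x
      = (-1:ℝ)^(k+2) * Bint (m-1) 1 x
        + ∑ j ∈ Finset.Icc 2 (k+1), (-1:ℝ)^(k+1+j) * Bint (m-1) j x := by
    have h : Finset.Icc 1 (k+1) = insert 1 (Finset.Icc 2 (k+1)) := by
      ext a; simp only [Finset.mem_Icc, Finset.mem_insert]; omega
    rw [h, Finset.sum_insert (by simp)]
  rw [hkey]
  simp only [hF, hG, hL]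
  rw [hsplit]
  have hsgn1 : ((-1:ℝ))^(k+2+1) = (-1)^(k+1) := by
    rw [show k+2+1 = (k+1)+2 from by ring, pow_add]; norm_num
  have hsc : ∀ j, ((-1:ℝ))^(k+2+j+1) = (-1)^(k+1+j) := by
    intro j
    rw [show k+2+j+1 = (k+1+j)+2 from by ring, pow_add]; norm_num
  have hsum2 : ∑ j ∈ Finset.Icc 2 (k+2-1), (-1:ℝ)^(k+2+j+1) * Bint (m-1) j x
      = ∑ j ∈ Finset.Icc 2 (k+1), (-1:ℝ)^(k+1+j) * Bint (m-1) j x := by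
    rw [show k+2-1 = k+1 from by omega]
    exact Finset.sum_congr rfl fun j _ => by rw [hsc j]
  rw [hsum2, hsgn1]
  have hc1 : ((k+2:ℕ):ℝ) - 1 = (k:ℝ)+1 := by push_cast; ring
  rw [hc1, show k+2-1 = k+1 from by omega]
  have hk1 : ((k:ℝ)+1) ≠ 0 := by positivity
  have hxk : (x:ℝ)^(k+1) ≠ 0 := by positivity
  field_simp
  ring

lemma neg_one_pow_congr_mod {a b : ℕ} (h : a % 2 = b % 2) : ((-1:ℝ))^a = (-1)^b := by
  conv_lhs => rw [← Nat.div_add_mod a 2]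
  conv_rhs => rw [← Nat.div_add_mod b 2]
  rw [pow_add, pow_add, pow_mul, pow_mul]
  norm_num [h]

lemma chainSum_const_mul (c : ℝ) (f : ℕ → ℝ) : ∀ y n, chainSum (fun i => c * f i) n y = c * chainSum f n y := by
  intro y
  induction y with
  | zero => intro n; simp [chainSum]; ring
  | succ y ih =>
    intro n
    show (1 / ((n : ℝ) - 1)) * ∑ i ∈ Finset.Icc 2 (n - 1), chainSum (fun i => c * f i) i y
      = c * ((1 / ((n : ℝ) - 1)) * ∑ i ∈ Finset.Icc 2 (n - 1), chainSum f i y)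
    rw [Finset.sum_congr rfl fun i _ => ih i, ← Finset.mul_sum]
    ring

lemma chainSum_congr {f g : ℕ → ℝ} (h : ∀ i, f i = g i) (n y : ℕ) :
    chainSum f n y = chainSum g n y := by
  have : f = g := funext h
  rw [this]

lemma chainSum_vanish (f : ℕ → ℝ) : ∀ y n, 2 ≤ n → n - 1 ≤ y → chainSum f n y = 0 := by
  intro y
  induction y with
  | zero => intro n hn h; omega
  | succ y ih =>
    intro n hn h
    show (1 / ((n : ℝ) - 1)) * ∑ i ∈ Finset.Icc 2 (n - 1), chainSum f i y = 0
    rw [Finset.sum_congr rfl fun i hi => by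
      simp only [Finset.mem_Icc] at hi
      exact ih i hi.1 (by omega)]
    simp

lemma coeff_eq (m z : ℕ) (hm : 1 ≤ m) :
    ((m.choose (z+1) : ℝ)) * ((z+1).factorial : ℝ) = (m : ℝ) * ((m-1).choose z : ℝ) * (z.factorial : ℝ) := by
  have h := Nat.add_one_mul_choose_eq (m-1) z
  have h2 : m - 1 + 1 = m := by omega
  rw [h2] at h
  -- h : m * (m-1).choose z = m.choose (z+1) * (z+1)
  have : (m.choose (z+1)) * ((z+1).factorial) = m * ((m-1).choose z) * (z.factorial) := by
    rw [Nat.factorial_succ]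
    calc m.choose (z+1) * ((z+1) * z.factorial) = (m.choose (z+1) * (z+1)) * z.factorial := by ring
      _ = (m * (m-1).choose z) * z.factorial := by rw [← h]
  exact_mod_cast congrArg (Nat.cast : ℕ → ℝ) this

lemma double_sum_step (n : ℕ) (G : ℕ → ℕ → ℝ)
    (hvan : ∀ k, 2 ≤ k → ∀ z, k - 1 ≤ z → G z k = 0) :
    ∑ k ∈ Finset.Icc 2 (n-1), ∑ z ∈ Finset.range (k-1), G z k
      = ∑ z ∈ Finset.range (n-2), ∑ k ∈ Finset.Icc 2 (n-1), G z k := by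
  have h1 : ∀ k ∈ Finset.Icc 2 (n-1), ∑ z ∈ Finset.range (k-1), G z k
      = ∑ z ∈ Finset.range (n-2), G z k := by
    intro k hk
    simp only [Finset.mem_Icc] at hk
    apply Finset.sum_subset (Finset.range_subset_range.2 (by omega))
    intro z _ hz2
    simp only [Finset.mem_range, not_lt] at hz2
    exact hvan k hk.1 z hz2
  rw [Finset.sum_congr rfl h1, Finset.sum_comm]

lemma transfer (n m : ℕ) (hn : 2 ≤ n) (c d : ℕ → ℝ) (F : ℕ → ℕ → ℝ) (G : ℕ → ℕ → ℕ → ℝ)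
    (hc : ∀ z, c (z+1) = (m:ℝ) * d z)
    (hrel : ∀ k, 2 ≤ k → k ≤ n-1 → ∀ z i, F (z+1) i = (-1:ℝ)^(n+k+1) * G k z i) :
    ∑ y ∈ Finset.range (n-1), c y * chainSum (fun i => F y i) n y
      = c 0 * chainSum (fun i => F 0 i) n 0
        + ((m:ℝ)/((n:ℝ)-1)) * ∑ k ∈ Finset.Icc 2 (n-1), (-1:ℝ)^(n+k+1)
            * ∑ z ∈ Finset.range (k-1), d z * chainSum (fun i => G k z i) k z := by
  have hsplit : ∑ y ∈ Finset.range (n-1), c y * chainSum (fun i => F y i) n y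
      = c 0 * chainSum (fun i => F 0 i) n 0
        + ∑ z ∈ Finset.range (n-2), c (z+1) * chainSum (fun i => F (z+1) i) n (z+1) := by
    conv_lhs => rw [show n-1 = (n-2)+1 from by omega, Finset.sum_range_succ']
    rw [add_comm]
  rw [hsplit]
  congr 1
  have hstep : ∀ z ∈ Finset.range (n-2), c (z+1) * chainSum (fun i => F (z+1) i) n (z+1)
      = ∑ k ∈ Finset.Icc 2 (n-1),
          ((m:ℝ)/((n:ℝ)-1)) * ((-1:ℝ)^(n+k+1) * (d z * chainSum (fun i => G k z i) k z)) := by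
    intro z hz
    calc c (z+1) * chainSum (fun i => F (z+1) i) n (z+1)
        = ((m:ℝ) * d z) * ((1/((n:ℝ)-1))
            * ∑ k ∈ Finset.Icc 2 (n-1), chainSum (fun i => F (z+1) i) k z) := by
          rw [hc]; rfl
      _ = ((m:ℝ) * d z) * ((1/((n:ℝ)-1))
            * ∑ k ∈ Finset.Icc 2 (n-1), (-1:ℝ)^(n+k+1) * chainSum (fun i => G k z i) k z) := by
          congr 1
          congr 1
          apply Finset.sum_congr rfl
          intro k hk
          simp only [Finset.mem_Icc] at hk
          rw [chainSum_congr (hrel k hk.1 hk.2 z) k z]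
          exact chainSum_const_mul _ _ z k
      _ = ∑ k ∈ Finset.Icc 2 (n-1),
          ((m:ℝ)/((n:ℝ)-1)) * ((-1:ℝ)^(n+k+1) * (d z * chainSum (fun i => G k z i) k z)) := by
          rw [Finset.mul_sum, Finset.mul_sum]
          apply Finset.sum_congr rfl
          intro k _
          ring
  have hvan : ∀ k, 2 ≤ k → ∀ z, k - 1 ≤ z →
      ((m:ℝ)/((n:ℝ)-1)) * ((-1:ℝ)^(n+k+1) * (d z * chainSum (fun i => G k z i) k z)) = 0 := by
    intro k hk z hz
    rw [chainSum_vanish _ z k hk hz]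
    ring
  have hRHS : ((m:ℝ)/((n:ℝ)-1)) * ∑ k ∈ Finset.Icc 2 (n-1), (-1:ℝ)^(n+k+1)
        * ∑ z ∈ Finset.range (k-1), d z * chainSum (fun i => G k z i) k z
      = ∑ k ∈ Finset.Icc 2 (n-1), ∑ z ∈ Finset.range (k-1),
          ((m:ℝ)/((n:ℝ)-1)) * ((-1:ℝ)^(n+k+1) * (d z * chainSum (fun i => G k z i) k z)) := by
    rw [Finset.mul_sum]
    refine Finset.sum_congr rfl fun k _ => ?_
    rw [Finset.mul_sum, Finset.mul_sum]
  rw [Finset.sum_congr rfl hstep, hRHS]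
  exact (double_sum_step n _ hvan).symm

lemma main_aux {x : ℝ} (hx : 0 < x) :
    ∀ n, 2 ≤ n → ∀ m, n ≤ m → Bint m n x =
      (∑ y ∈ Finset.range (n - 1), (m.choose y : ℝ) * (y.factorial : ℝ)
        * chainSum (fun i =>
            (-1 : ℝ) ^ (n + i + y + 1) * (Real.log (1 + x)) ^ (m - y) / x ^ (i - 1)) n y)
      + (∑ y ∈ Finset.range (n - 1), (m.choose y : ℝ) * (y.factorial : ℝ)
        * chainSum (fun _ => (-1 : ℝ) ^ (n + y + 1) * (Real.log (1 + x)) ^ (m - y)) n y)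
      + (∑ y ∈ Finset.range (n - 1), (m.choose (y + 1) : ℝ) * ((y + 1).factorial : ℝ)
        * chainSum (fun _ => (-1 : ℝ) ^ (n + y) * Bint (m - y - 1) 1 x) n y) := by
  intro n
  induction n using Nat.strong_induction_on with
  | _ n ih =>
  intro hn m hmn
  have hm : 1 ≤ m := by omega
  set L : ℝ := Real.log (1 + x) with hL
  -- the inductive hypothesis applied at each k
  have hIH : ∀ k ∈ Finset.Icc 2 (n-1), Bint (m-1) k x =
      (∑ y ∈ Finset.range (k - 1), ((m-1).choose y : ℝ) * (y.factorial : ℝ)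
        * chainSum (fun i => (-1 : ℝ) ^ (k + i + y + 1) * L ^ (m - 1 - y) / x ^ (i - 1)) k y)
      + (∑ y ∈ Finset.range (k - 1), ((m-1).choose y : ℝ) * (y.factorial : ℝ)
        * chainSum (fun _ => (-1 : ℝ) ^ (k + y + 1) * L ^ (m - 1 - y)) k y)
      + (∑ y ∈ Finset.range (k - 1), ((m-1).choose (y + 1) : ℝ) * ((y + 1).factorial : ℝ)
        * chainSum (fun _ => (-1 : ℝ) ^ (k + y) * Bint (m - 1 - y - 1) 1 x) k y) := by
    intro k hk
    simp only [Finset.mem_Icc] at hk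
    exact ih k (by omega) hk.1 (m-1) (by omega)
  rw [recursion m n hn hmn hx, Finset.sum_congr rfl (fun k hk => by rw [hIH k hk])]
  -- transfer for sum A
  have hA : (∑ y ∈ Finset.range (n - 1), (m.choose y : ℝ) * (y.factorial : ℝ)
        * chainSum (fun i => (-1 : ℝ) ^ (n + i + y + 1) * L ^ (m - y) / x ^ (i - 1)) n y)
      = ((m.choose 0 : ℝ) * ((0:ℕ).factorial : ℝ))
          * chainSum (fun i => (-1 : ℝ) ^ (n + i + 0 + 1) * L ^ (m - 0) / x ^ (i - 1)) n 0
        + ((m:ℝ)/((n:ℝ)-1)) * ∑ k ∈ Finset.Icc 2 (n-1), (-1:ℝ)^(n+k+1)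
            * ∑ z ∈ Finset.range (k-1), (((m-1).choose z : ℝ) * (z.factorial : ℝ))
              * chainSum (fun i => (-1 : ℝ) ^ (k + i + z + 1) * L ^ (m - 1 - z) / x ^ (i - 1)) k z := by
    refine transfer n m hn (fun y => (m.choose y : ℝ) * (y.factorial : ℝ))
      (fun z => ((m-1).choose z : ℝ) * (z.factorial : ℝ))
      (fun y i => (-1 : ℝ) ^ (n + i + y + 1) * L ^ (m - y) / x ^ (i - 1))
      (fun k z i => (-1 : ℝ) ^ (k + i + z + 1) * L ^ (m - 1 - z) / x ^ (i - 1))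
      (fun z => by
        show (m.choose (z+1):ℝ) * ((z+1).factorial:ℝ)
          = (m:ℝ) * (((m-1).choose z : ℝ) * (z.factorial:ℝ))
        rw [coeff_eq m z hm, mul_assoc]) ?_
    intro k hk2 hkn z i
    show (-1 : ℝ) ^ (n + i + (z+1) + 1) * L ^ (m - (z+1)) / x ^ (i - 1)
      = (-1:ℝ)^(n+k+1) * ((-1 : ℝ) ^ (k + i + z + 1) * L ^ (m - 1 - z) / x ^ (i - 1))
    have h1 : m - (z+1) = m - 1 - z := by omega
    have h2 : (-1:ℝ)^(n+i+(z+1)+1) = (-1)^(n+k+1) * (-1)^(k+i+z+1) := by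
      rw [← pow_add]; exact neg_one_pow_congr_mod (by omega)
    simp only [h1, h2]
    ring
  -- transfer for sum B
  have hB : (∑ y ∈ Finset.range (n - 1), (m.choose y : ℝ) * (y.factorial : ℝ)
        * chainSum (fun _ => (-1 : ℝ) ^ (n + y + 1) * L ^ (m - y)) n y)
      = ((m.choose 0 : ℝ) * ((0:ℕ).factorial : ℝ))
          * chainSum (fun _ => (-1 : ℝ) ^ (n + 0 + 1) * L ^ (m - 0)) n 0
        + ((m:ℝ)/((n:ℝ)-1)) * ∑ k ∈ Finset.Icc 2 (n-1), (-1:ℝ)^(n+k+1)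
            * ∑ z ∈ Finset.range (k-1), (((m-1).choose z : ℝ) * (z.factorial : ℝ))
              * chainSum (fun _ => (-1 : ℝ) ^ (k + z + 1) * L ^ (m - 1 - z)) k z := by
    refine transfer n m hn (fun y => (m.choose y : ℝ) * (y.factorial : ℝ))
      (fun z => ((m-1).choose z : ℝ) * (z.factorial : ℝ))
      (fun y _ => (-1 : ℝ) ^ (n + y + 1) * L ^ (m - y))
      (fun k z _ => (-1 : ℝ) ^ (k + z + 1) * L ^ (m - 1 - z))
      (fun z => by
        show (m.choose (z+1):ℝ) * ((z+1).factorial:ℝ)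
          = (m:ℝ) * (((m-1).choose z : ℝ) * (z.factorial:ℝ))
        rw [coeff_eq m z hm, mul_assoc]) ?_
    intro k hk2 hkn z i
    show (-1 : ℝ) ^ (n + (z+1) + 1) * L ^ (m - (z+1))
      = (-1:ℝ)^(n+k+1) * ((-1 : ℝ) ^ (k + z + 1) * L ^ (m - 1 - z))
    have h1 : m - (z+1) = m - 1 - z := by omega
    have h2 : (-1:ℝ)^(n+(z+1)+1) = (-1)^(n+k+1) * (-1)^(k+z+1) := by
      rw [← pow_add]; exact neg_one_pow_congr_mod (by omega)
    simp only [h1, h2]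
    ring
  -- transfer for sum C
  have hC : (∑ y ∈ Finset.range (n - 1), (m.choose (y + 1) : ℝ) * ((y + 1).factorial : ℝ)
        * chainSum (fun _ => (-1 : ℝ) ^ (n + y) * Bint (m - y - 1) 1 x) n y)
      = ((m.choose 1 : ℝ) * ((1:ℕ).factorial : ℝ))
          * chainSum (fun _ => (-1 : ℝ) ^ (n + 0) * Bint (m - 0 - 1) 1 x) n 0
        + ((m:ℝ)/((n:ℝ)-1)) * ∑ k ∈ Finset.Icc 2 (n-1), (-1:ℝ)^(n+k+1)
            * ∑ z ∈ Finset.range (k-1), (((m-1).choose (z+1) : ℝ) * ((z+1).factorial : ℝ))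
              * chainSum (fun _ => (-1 : ℝ) ^ (k + z) * Bint (m - 1 - z - 1) 1 x) k z := by
    refine transfer n m hn (fun y => (m.choose (y+1) : ℝ) * ((y+1).factorial : ℝ))
      (fun z => ((m-1).choose (z+1) : ℝ) * ((z+1).factorial : ℝ))
      (fun y _ => (-1 : ℝ) ^ (n + y) * Bint (m - y - 1) 1 x)
      (fun k z _ => (-1 : ℝ) ^ (k + z) * Bint (m - 1 - z - 1) 1 x)
      (fun z => by
        show (m.choose (z+1+1):ℝ) * ((z+1+1).factorial:ℝ)
          = (m:ℝ) * (((m-1).choose (z+1) : ℝ) * ((z+1).factorial:ℝ))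
        rw [coeff_eq m (z+1) hm, mul_assoc]) ?_
    intro k hk2 hkn z i
    show (-1 : ℝ) ^ (n + (z+1)) * Bint (m - (z+1) - 1) 1 x
      = (-1:ℝ)^(n+k+1) * ((-1 : ℝ) ^ (k + z) * Bint (m - 1 - z - 1) 1 x)
    have h1 : m - (z+1) - 1 = m - 1 - z - 1 := by omega
    have h2 : (-1:ℝ)^(n+(z+1)) = (-1)^(n+k+1) * (-1)^(k+z) := by
      rw [← pow_add]; exact neg_one_pow_congr_mod (by omega)
    simp only [h1, h2]
    ring
  rw [hA, hB, hC]
  have hdist : (∑ k ∈ Finset.Icc 2 (n-1), (-1:ℝ)^(n+k+1) *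
        ((∑ y ∈ Finset.range (k - 1), ((m-1).choose y : ℝ) * (y.factorial : ℝ)
          * chainSum (fun i => (-1 : ℝ) ^ (k + i + y + 1) * L ^ (m - 1 - y) / x ^ (i - 1)) k y)
        + (∑ y ∈ Finset.range (k - 1), ((m-1).choose y : ℝ) * (y.factorial : ℝ)
          * chainSum (fun _ => (-1 : ℝ) ^ (k + y + 1) * L ^ (m - 1 - y)) k y)
        + (∑ y ∈ Finset.range (k - 1), ((m-1).choose (y + 1) : ℝ) * ((y + 1).factorial : ℝ)
          * chainSum (fun _ => (-1 : ℝ) ^ (k + y) * Bint (m - 1 - y - 1) 1 x) k y)))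
      = (∑ k ∈ Finset.Icc 2 (n-1), (-1:ℝ)^(n+k+1) *
          ∑ y ∈ Finset.range (k - 1), ((m-1).choose y : ℝ) * (y.factorial : ℝ)
          * chainSum (fun i => (-1 : ℝ) ^ (k + i + y + 1) * L ^ (m - 1 - y) / x ^ (i - 1)) k y)
        + (∑ k ∈ Finset.Icc 2 (n-1), (-1:ℝ)^(n+k+1) *
          ∑ y ∈ Finset.range (k - 1), ((m-1).choose y : ℝ) * (y.factorial : ℝ)
          * chainSum (fun _ => (-1 : ℝ) ^ (k + y + 1) * L ^ (m - 1 - y)) k y)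
        + (∑ k ∈ Finset.Icc 2 (n-1), (-1:ℝ)^(n+k+1) *
          ∑ y ∈ Finset.range (k - 1), ((m-1).choose (y + 1) : ℝ) * ((y + 1).factorial : ℝ)
          * chainSum (fun _ => (-1 : ℝ) ^ (k + y) * Bint (m - 1 - y - 1) 1 x) k y) := by
    rw [← Finset.sum_add_distrib, ← Finset.sum_add_distrib]
    exact Finset.sum_congr rfl fun k _ => by ring
  rw [hdist]
  have h0A : (1:ℝ)/((n:ℝ)-1) * (-L^m / x^(n-1))
      = ((m.choose 0 : ℝ) * ((0:ℕ).factorial : ℝ))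
          * chainSum (fun i => (-1 : ℝ) ^ (n + i + 0 + 1) * L ^ (m - 0) / x ^ (i - 1)) n 0 := by
    show _ = ((m.choose 0 : ℝ) * ((0:ℕ).factorial : ℝ))
      * ((1 / ((n : ℝ) - 1)) * ((-1 : ℝ) ^ (n + n + 0 + 1) * L ^ (m - 0) / x ^ (n - 1)))
    have hs : (-1:ℝ)^(n+n+0+1) = -1 := by
      have h := neg_one_pow_congr_mod (a := n+n+0+1) (b := 1) (by omega)
      simpa using h
    rw [hs]
    simp
  have h0B : (1:ℝ)/((n:ℝ)-1) * ((-1:ℝ)^(n+1) * L^m)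
      = ((m.choose 0 : ℝ) * ((0:ℕ).factorial : ℝ))
          * chainSum (fun _ => (-1 : ℝ) ^ (n + 0 + 1) * L ^ (m - 0)) n 0 := by
    show _ = ((m.choose 0 : ℝ) * ((0:ℕ).factorial : ℝ))
      * ((1 / ((n : ℝ) - 1)) * ((-1 : ℝ) ^ (n + 0 + 1) * L ^ (m - 0)))
    simp
  have h0C : ((m:ℝ)/((n:ℝ)-1)) * ((-1:ℝ)^n * Bint (m-1) 1 x)
      = ((m.choose 1 : ℝ) * ((1:ℕ).factorial : ℝ))
          * chainSum (fun _ => (-1 : ℝ) ^ (n + 0) * Bint (m - 0 - 1) 1 x) n 0 := by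
    show _ = ((m.choose 1 : ℝ) * ((1:ℕ).factorial : ℝ))
      * ((1 / ((n : ℝ) - 1)) * ((-1 : ℝ) ^ (n + 0) * Bint (m - 0 - 1) 1 x))
    simp [Nat.choose_one_right]
    ring
  rw [h0A, h0B, h0C]
  ring

theorem stmt6 (m n : ℕ) (hn : 2 ≤ n) (hmn : n ≤ m) (x : ℝ) (hx : 0 < x) :
    Bint m n x =
      (∑ y ∈ Finset.range (n - 1), (m.choose y : ℝ) * (y.factorial : ℝ)
        * chainSum (fun i =>
            (-1 : ℝ) ^ (n + i + y + 1) * (Real.log (1 + x)) ^ (m - y) / x ^ (i - 1)) n y)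
      + (∑ y ∈ Finset.range (n - 1), (m.choose y : ℝ) * (y.factorial : ℝ)
        * chainSum (fun _ => (-1 : ℝ) ^ (n + y + 1) * (Real.log (1 + x)) ^ (m - y)) n y)
      + (∑ y ∈ Finset.range (n - 1), (m.choose (y + 1) : ℝ) * ((y + 1).factorial : ℝ)
        * chainSum (fun _ => (-1 : ℝ) ^ (n + y) * Bint (m - y - 1) 1 x) n y) := by
  exact main_aux hx n hn m hmn
end

section
/- Let n, m ≥ 0 be integers and let x be a real number with 0 ≤ x < 1. Then ∫₀ˣ y^n log^m(1−y) dy = (−1)^m m!·Σ_{j=0}^{n} C(n,j)·(−1)^j/(j+1)^{m+1} − Σ_{j=0}^{n} C(n,j)·(−1)^j·((1−x)^{j+1}/(j+1))·Σ_{i=0}^{m} ((m+1−i)_i/(j+1)^i)·(−1)^i·log^{m−i}(1−x), where C(n,j) is a binomial coefficient. -/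
open Finset Real

lemma poch_succ' (t : ℝ) (k : ℕ) : poch t (k+1) = t * poch (t+1) k := by
  rw [poch, Finset.prod_range_succ', mul_comm]
  simp only [Nat.cast_zero, add_zero]
  congr 1
  apply Finset.prod_congr rfl
  intro i _
  push_cast; ring

lemma poch_one (m : ℕ) : poch 1 m = m.factorial := by
  induction m with
  | zero => simp [poch]
  | succ k ih => rw [poch, Finset.prod_range_succ, ← poch, ih, Nat.factorial_succ]; push_cast; ring

noncomputable def cc (m j i : ℕ) : ℝ := poch ((m:ℝ)+1-i) i / ((j:ℝ)+1)^i * (-1)^i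

lemma cc_rec (m j i : ℕ) :
    cc m j (i+1) = -(((m:ℝ)-i)/((j:ℝ)+1)) * cc m j i := by
  have ha : ((j:ℝ)+1) ≠ 0 := by positivity
  unfold cc
  have h1 : ((m:ℝ)+1-(↑(i+1):ℝ)) = (m:ℝ)-i := by push_cast; ring
  rw [h1, poch_succ']
  have h2 : ((m:ℝ)-i+1) = (m:ℝ)+1-i := by ring
  rw [h2]
  field_simp
  ring

lemma cc_zero (m j : ℕ) : cc m j 0 = 1 := by simp [cc, poch]

lemma key_sum (m j : ℕ) (L : ℝ) :
    ∑ i ∈ range (m+1), cc m j i * L^(m-i)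
      + (∑ i ∈ range (m+1), cc m j i * ((↑(m-i) : ℝ) * L^(m-i-1))) / ((j:ℝ)+1)
    = L^m := by
  have ha : ((j:ℝ)+1) ≠ 0 := by positivity
  rw [Finset.sum_range_succ (f := fun i => cc m j i * ((↑(m-i):ℝ) * L^(m-i-1)))]
  simp only [Nat.sub_self, Nat.cast_zero, zero_mul, mul_zero, add_zero]
  rw [Finset.sum_range_succ' (f := fun i => cc m j i * L^(m-i))]
  rw [cc_zero, Nat.sub_zero, one_mul, Finset.sum_div, add_right_comm]
  rw [← Finset.sum_add_distrib]
  rw [Finset.sum_eq_zero, zero_add]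
  intro i hi
  have him : i < m := mem_range.mp hi
  have hcast : (↑(m-i) : ℝ) = (m:ℝ) - i := by
    rw [Nat.cast_sub him.le]
  rw [cc_rec, hcast]
  have : m - (i+1) = m - i - 1 := by omega
  rw [this]
  field_simp
  ring

noncomputable def FF (m j : ℕ) (u : ℝ) : ℝ :=
  u^(j+1)/((j:ℝ)+1) * ∑ i ∈ range (m+1), cc m j i * (Real.log u)^(m-i)

lemma hasDerivAt_FF (m j : ℕ) {u : ℝ} (hu : 0 < u) :
    HasDerivAt (FF m j) (u^j * (Real.log u)^m) u := by
  have ha : ((j:ℝ)+1) ≠ 0 := by positivity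
  have h1 : HasDerivAt (fun u : ℝ => u^(j+1)/((j:ℝ)+1)) (u^j) u := by
    have := (hasDerivAt_pow (j+1) u).div_const ((j:ℝ)+1)
    have he : (↑(j+1) : ℝ) * u ^ (j+1-1) / ((j:ℝ)+1) = u^j := by
      push_cast [Nat.add_sub_cancel]
      field_simp
    rwa [he] at this
  have h2 : HasDerivAt (fun u : ℝ => ∑ i ∈ range (m+1), cc m j i * (Real.log u)^(m-i))
      (∑ i ∈ range (m+1), cc m j i * ((↑(m-i):ℝ) * (Real.log u)^(m-i-1) * u⁻¹)) u := by
    apply HasDerivAt.fun_sum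
    intro i _
    exact ((Real.hasDerivAt_log hu.ne').pow (m-i)).const_mul _
  have h3 : HasDerivAt (FF m j) _ u :=
    h1.fun_mul h2
  convert h3 using 1
  have hs : (∑ i ∈ range (m+1), cc m j i * ((↑(m-i):ℝ) * (Real.log u)^(m-i-1) * u⁻¹))
      = (∑ i ∈ range (m+1), cc m j i * ((↑(m-i):ℝ) * (Real.log u)^(m-i-1))) * u⁻¹ := by
    rw [Finset.sum_mul]; apply Finset.sum_congr rfl; intro i _; ring
  rw [hs]
  have hup : u^(j+1)/((j:ℝ)+1) * ((∑ i ∈ range (m+1), cc m j i * ((↑(m-i):ℝ) * (Real.log u)^(m-i-1))) * u⁻¹)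
      = u^j * ((∑ i ∈ range (m+1), cc m j i * ((↑(m-i):ℝ) * (Real.log u)^(m-i-1))) / ((j:ℝ)+1)) := by
    rw [pow_succ]
    field_simp
  rw [hup, ← mul_add, key_sum]

lemma FF_one (m j : ℕ) : FF m j 1 = (-1)^m * m.factorial / ((j:ℝ)+1)^(m+1) := by
  have ha : ((j:ℝ)+1) ≠ 0 := by positivity
  unfold FF
  rw [Real.log_one, one_pow, Finset.sum_range_succ, Finset.sum_eq_zero, zero_add]
  · have h1 : ((m:ℝ)+1-(m:ℝ)) = 1 := by ring
    simp only [Nat.sub_self, pow_zero, mul_one, cc, h1, poch_one]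
    rw [pow_succ]
    field_simp
  · intro i hi
    rw [zero_pow (Nat.sub_ne_zero_of_lt (mem_range.mp hi)), mul_zero]

theorem stmt8 (n m : ℕ) (x : ℝ) (hx0 : 0 ≤ x) (hx1 : x < 1) :
    (∫ y in (0:ℝ)..x, y ^ n * (Real.log (1 - y)) ^ m) =
      (-1 : ℝ) ^ m * (m.factorial : ℝ)
        * (∑ j ∈ Finset.range (n + 1), (n.choose j : ℝ) * (-1 : ℝ) ^ j / ((j : ℝ) + 1) ^ (m + 1))
      - ∑ j ∈ Finset.range (n + 1), (n.choose j : ℝ) * (-1 : ℝ) ^ j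
          * ((1 - x) ^ (j + 1) / ((j : ℝ) + 1))
          * ∑ i ∈ Finset.range (m + 1), (poch ((m : ℝ) + 1 - i) i / ((j : ℝ) + 1) ^ i)
              * (-1 : ℝ) ^ i * (Real.log (1 - x)) ^ (m - i) := by
  have hx : (0:ℝ) < 1 - x := by linarith
  -- substitution y ↦ 1 - y
  have hsub : (∫ y in (0:ℝ)..x, y ^ n * (Real.log (1 - y)) ^ m)
      = ∫ u in (1-x:ℝ)..1, (1-u)^n * (Real.log u)^m := by
    have := intervalIntegral.integral_comp_sub_left (a := (0:ℝ)) (b := x)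
      (fun u => (1-u)^n * (Real.log u)^m) 1
    simp only [sub_zero] at this
    rw [← this]
    apply intervalIntegral.integral_congr
    intro y _
    simp only []
    ring_nf
  rw [hsub]
  -- FTC with G = ∑ j, choose * (-1)^j * FF
  set G : ℝ → ℝ := fun u => ∑ j ∈ Finset.range (n+1), (n.choose j : ℝ) * (-1:ℝ)^j * FF m j u with hG
  have hderiv : ∀ u ∈ Set.uIcc (1-x) (1:ℝ),
      HasDerivAt G ((1-u)^n * (Real.log u)^m) u := by
    intro u hu
    rw [Set.uIcc_of_le (by linarith)] at hu
    have hu0 : 0 < u := lt_of_lt_of_le hx hu.1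
    have : HasDerivAt G (∑ j ∈ Finset.range (n+1),
        (n.choose j : ℝ) * (-1:ℝ)^j * (u^j * (Real.log u)^m)) u := by
      apply HasDerivAt.fun_sum
      intro j _
      exact (hasDerivAt_FF m j hu0).const_mul _
    convert this using 1
    rw [show (1-u : ℝ) = -u + 1 by ring, add_pow, Finset.sum_mul]
    apply Finset.sum_congr rfl
    intro j _
    rw [neg_pow]
    ring
  have hint : IntervalIntegrable (fun u => (1-u)^n * (Real.log u)^m)
      MeasureTheory.volume (1-x) 1 := by
    apply ContinuousOn.intervalIntegrable
    intro u hu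
    rw [Set.uIcc_of_le (by linarith)] at hu
    have hu0 : 0 < u := lt_of_lt_of_le hx hu.1
    exact (((continuous_const.sub continuous_id).pow n).continuousAt.mul
      (((Real.continuousAt_log hu0.ne').pow m))).continuousWithinAt
  rw [intervalIntegral.integral_eq_sub_of_hasDerivAt hderiv hint]
  -- evaluate
  have hG1 : G 1 = (-1 : ℝ) ^ m * (m.factorial : ℝ)
      * (∑ j ∈ Finset.range (n + 1), (n.choose j : ℝ) * (-1 : ℝ) ^ j / ((j : ℝ) + 1) ^ (m + 1)) := by
    rw [hG]
    simp only [FF_one]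
    rw [Finset.mul_sum]
    apply Finset.sum_congr rfl
    intro j _
    ring
  have hG2 : G (1-x) = ∑ j ∈ Finset.range (n + 1), (n.choose j : ℝ) * (-1 : ℝ) ^ j
          * ((1 - x) ^ (j + 1) / ((j : ℝ) + 1))
          * ∑ i ∈ Finset.range (m + 1), (poch ((m : ℝ) + 1 - i) i / ((j : ℝ) + 1) ^ i)
              * (-1 : ℝ) ^ i * (Real.log (1 - x)) ^ (m - i) := by
    rw [hG]
    apply Finset.sum_congr rfl
    intro j _
    unfold FF cc
    ring
  rw [hG1, hG2]
end
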